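/- arXiv:1512.03037 — 8 statements merged into one kernel-verified Lean document; each statement's English description precedes it below -/
import Mathlib

section
/- Let G be a finite abelian group of order n ≥ 2 and let t ≥ 2 be an integer. Then every t-independent subset A of G satisfies |A| < ((1/2)·⌊t/2⌋!·n)^(1/⌊t/2⌋); in particular, s(G,t) < ((1/2)·⌊t/2⌋!·n)^(1/⌊t/2⌋). -/
private lemma prod_eq_choose (m : ℕ) : ∀ h : ℕ,
    ∏ i ∈ Finset.range h, (m + i + 1) = h.factorial * (m + h).choose h := by
  intro h
  induction h with
  | zero => simp
  | succ h ih =>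
    rw [Finset.prod_range_succ, ih, Nat.factorial_succ]
    have hs := Nat.add_one_mul_choose_eq (m + h) h
    calc h.factorial * (m + h).choose h * (m + h + 1)
        = h.factorial * ((m + h + 1) * (m + h).choose h) := by ring
      _ = h.factorial * ((m + h + 1).choose (h + 1) * (h + 1)) := by rw [hs]
      _ = (h + 1) * h.factorial * (m + (h + 1)).choose (h + 1) := by ring_nf

private lemma pow_add_factorial_le (m : ℕ) : ∀ h : ℕ, 1 ≤ h →
    m ^ h + h.factorial ≤ ∏ i ∈ Finset.range h, (m + i + 1) := by
  intro h
  induction h with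
  | zero => omega
  | succ h ih =>
    intro _
    by_cases hh : h = 0
    · subst hh; simp
    · have ih' := ih (Nat.one_le_iff_ne_zero.2 hh)
      rw [Finset.prod_range_succ, pow_succ, Nat.factorial_succ]
      have h2 := Nat.mul_le_mul_right (m + h + 1) ih'
      have h1 : m ^ h * m + (h + 1) * h.factorial
          ≤ (m ^ h + h.factorial) * (m + h + 1) := by
        ring_nf
        nlinarith [Nat.zero_le (m ^ h * h), Nat.zero_le (m ^ h),
          Nat.zero_le (h.factorial * m)]
      exact le_trans h1 h2

private lemma sum_count_some_le {G : Type*} [DecidableEq G] (A : Finset G)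
    (p : Multiset (Option G)) :
    ∑ x ∈ A, p.count (some x) ≤ Multiset.card p := by
  have hinj : ∀ x ∈ A, ∀ y ∈ A, (some x : Option G) = some y → x = y := by
    intro x _ y _ hxy; exact Option.some_injective G hxy
  rw [← Finset.sum_image (f := fun y => Multiset.count y p) hinj]
  calc ∑ y ∈ A.image some, p.count y
      ≤ ∑ y ∈ A.image some ∪ p.toFinset, p.count y :=
        Finset.sum_le_sum_of_subset Finset.subset_union_left
    _ = ∑ y ∈ p.toFinset, p.count y := by
        refine (Finset.sum_subset Finset.subset_union_right fun y _ hy => ?_).symm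
        exact Multiset.count_eq_zero_of_notMem (by simpa using hy)
    _ = Multiset.card p := Multiset.toFinset_sum_count_eq p

/-- A subset `A` of an (additive) abelian group is `t`-independent if whenever
`λ₁a₁ + ⋯ + λₘaₘ = 0` with `a₁, …, aₘ` the (distinct) elements of `A` and
`|λ₁| + ⋯ + |λₘ| ≤ t`, all coefficients `λᵢ` vanish. -/
def IsTIndep {G : Type*} [AddCommGroup G] (t : ℕ) (A : Finset G) : Prop :=
  ∀ c : G → ℤ, (∀ x ∉ A, c x = 0) →
    (∑ x ∈ A, |c x|) ≤ (t : ℤ) →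
    (∑ x ∈ A, c x • x) = 0 → ∀ x, c x = 0

private lemma val_eq {G : Type*} [AddCommGroup G] [DecidableEq G] (A : Finset G)
    (p : Multiset (Option G)) (hp : ∀ o ∈ p, o ∈ insert none (A.image some)) :
    (p.map (fun o => o.getD 0)).sum = ∑ x ∈ A, p.count (some x) • x := by
  rw [Finset.sum_multiset_map_count]
  have hsub : p.toFinset ⊆ insert none (A.image some) := fun o ho =>
    hp o (Multiset.mem_toFinset.1 ho)
  rw [Finset.sum_subset hsub (fun o _ ho => by
    rw [Multiset.count_eq_zero_of_notMem (by simpa using ho), zero_smul])]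
  rw [Finset.sum_insert (by simp)]
  simp only [Option.getD_none, smul_zero, zero_add]
  rw [Finset.sum_image (fun x _ y _ h => Option.some_injective G h)]
  simp

private lemma counts_eq {G : Type*} [AddCommGroup G] [DecidableEq G] {t : ℕ} {A : Finset G}
    (hA : IsTIndep t A) {p q : Multiset (Option G)}
    (hp : ∀ o ∈ p, o ∈ insert none (A.image some))
    (hq : ∀ o ∈ q, o ∈ insert none (A.image some))
    (hcard : Multiset.card p + Multiset.card q ≤ t)
    (hval : (p.map (fun o => o.getD 0)).sum = (q.map (fun o => o.getD 0)).sum) :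
    ∀ x : G, p.count (some x) = q.count (some x) := by
  set c : G → ℤ := fun x => (p.count (some x) : ℤ) - q.count (some x) with hc
  have hmemp : ∀ x : G, some x ∈ p → x ∈ A := by
    intro x hx
    have := hp _ hx
    simpa using this
  have hmemq : ∀ x : G, some x ∈ q → x ∈ A := by
    intro x hx
    have := hq _ hx
    simpa using this
  have h0 : ∀ x ∉ A, c x = 0 := by
    intro x hx
    have h1 : (some x : Option G) ∉ p := fun h => hx (hmemp x h)
    have h2 : (some x : Option G) ∉ q := fun h => hx (hmemq x h)
    simp [hc, Multiset.count_eq_zero_of_notMem h1, Multiset.count_eq_zero_of_notMem h2]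
  have habs : ∑ x ∈ A, |c x| ≤ (t : ℤ) := by
    have hbound : ∀ x ∈ A, |c x| ≤ (p.count (some x) : ℤ) + (q.count (some x) : ℤ) := by
      intro x _
      rw [hc]
      have h1 : (0 : ℤ) ≤ (p.count (some x) : ℤ) := Int.natCast_nonneg _
      have h2 : (0 : ℤ) ≤ (q.count (some x) : ℤ) := Int.natCast_nonneg _
      rw [abs_sub_le_iff]
      omega
    calc ∑ x ∈ A, |c x| ≤ ∑ x ∈ A, ((p.count (some x) : ℤ) + (q.count (some x) : ℤ)) :=
          Finset.sum_le_sum hbound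
      _ = ((∑ x ∈ A, p.count (some x) : ℕ) : ℤ) + ((∑ x ∈ A, q.count (some x) : ℕ) : ℤ) := by
          push_cast; rw [Finset.sum_add_distrib]
      _ ≤ (t : ℤ) := by
          have h1 := sum_count_some_le A p
          have h2 := sum_count_some_le A q
          have : (∑ x ∈ A, p.count (some x)) + (∑ x ∈ A, q.count (some x)) ≤ t :=
            le_trans (Nat.add_le_add h1 h2) hcard
          exact_mod_cast this
  have hsum : ∑ x ∈ A, c x • x = 0 := by
    have e1 := val_eq A p hp
    have e2 := val_eq A q hq
    have : ∑ x ∈ A, c x • x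
        = ∑ x ∈ A, (p.count (some x) • x - q.count (some x) • x) := by
      refine Finset.sum_congr rfl fun x _ => ?_
      rw [hc, sub_smul, natCast_zsmul, natCast_zsmul]
    rw [this, Finset.sum_sub_distrib, ← e1, ← e2, hval, sub_self]
  have hz := hA c h0 habs hsum
  intro x
  by_cases hx : x ∈ A
  · have hthis : (p.count (some x) : ℤ) - q.count (some x) = 0 := hz x
    omega
  · have h1 : (some x : Option G) ∉ p := fun h => hx (hmemp x h)
    have h2 : (some x : Option G) ∉ q := fun h => hx (hmemq x h)
    rw [Multiset.count_eq_zero_of_notMem h1, Multiset.count_eq_zero_of_notMem h2]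

private lemma counts_zero {G : Type*} [AddCommGroup G] [DecidableEq G] {t : ℕ} {A : Finset G}
    (hA : IsTIndep t A) {p q : Multiset (Option G)}
    (hp : ∀ o ∈ p, o ∈ insert none (A.image some))
    (hq : ∀ o ∈ q, o ∈ insert none (A.image some))
    (hcard : Multiset.card p + Multiset.card q ≤ t)
    (hval : (p.map (fun o => o.getD 0)).sum + (q.map (fun o => o.getD 0)).sum = 0) :
    ∀ x : G, p.count (some x) = 0 ∧ q.count (some x) = 0 := by
  set c : G → ℤ := fun x => (p.count (some x) : ℤ) + q.count (some x) with hc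
  have hmemp : ∀ x : G, some x ∈ p → x ∈ A := fun x hx => by simpa using hp _ hx
  have hmemq : ∀ x : G, some x ∈ q → x ∈ A := fun x hx => by simpa using hq _ hx
  have h0 : ∀ x ∉ A, c x = 0 := by
    intro x hx
    have h1 : (some x : Option G) ∉ p := fun h => hx (hmemp x h)
    have h2 : (some x : Option G) ∉ q := fun h => hx (hmemq x h)
    simp [hc, Multiset.count_eq_zero_of_notMem h1, Multiset.count_eq_zero_of_notMem h2]
  have habs : ∑ x ∈ A, |c x| ≤ (t : ℤ) := by
    have hbound : ∀ x ∈ A, |c x| = (p.count (some x) : ℤ) + (q.count (some x) : ℤ) := by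
      intro x _
      rw [hc, abs_of_nonneg (by positivity)]
    calc ∑ x ∈ A, |c x| = ∑ x ∈ A, ((p.count (some x) : ℤ) + (q.count (some x) : ℤ)) :=
          Finset.sum_congr rfl hbound
      _ = ((∑ x ∈ A, p.count (some x) : ℕ) : ℤ) + ((∑ x ∈ A, q.count (some x) : ℕ) : ℤ) := by
          push_cast; rw [Finset.sum_add_distrib]
      _ ≤ (t : ℤ) := by
          have h1 := sum_count_some_le A p
          have h2 := sum_count_some_le A q
          have : (∑ x ∈ A, p.count (some x)) + (∑ x ∈ A, q.count (some x)) ≤ t :=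
            le_trans (Nat.add_le_add h1 h2) hcard
          exact_mod_cast this
  have hsum : ∑ x ∈ A, c x • x = 0 := by
    have e1 := val_eq A p hp
    have e2 := val_eq A q hq
    have : ∑ x ∈ A, c x • x
        = ∑ x ∈ A, (p.count (some x) • x + q.count (some x) • x) := by
      refine Finset.sum_congr rfl fun x _ => ?_
      rw [hc, add_smul, natCast_zsmul, natCast_zsmul]
    rw [this, Finset.sum_add_distrib, ← e1, ← e2, hval]
  have hz := hA c h0 habs hsum
  intro x
  by_cases hx : x ∈ A
  · have hthis : (p.count (some x) : ℤ) + q.count (some x) = 0 := hz x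
    omega
  · have h1 : (some x : Option G) ∉ p := fun h => hx (hmemp x h)
    have h2 : (some x : Option G) ∉ q := fun h => hx (hmemq x h)
    rw [Multiset.count_eq_zero_of_notMem h1, Multiset.count_eq_zero_of_notMem h2]
    exact ⟨rfl, rfl⟩

private lemma key_count {G : Type*} [AddCommGroup G] [Fintype G] [DecidableEq G]
    {t : ℕ} {A : Finset G} (hA : IsTIndep t A) {h : ℕ} (hht : 2 * h ≤ t) :
    2 * (A.card + h).choose h ≤ Fintype.card G + 1 := by
  classical
  set e : Option ↥A → Option G := Option.map (fun a => (a : G)) with he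
  have heinj : Function.Injective e := Option.map_injective Subtype.val_injective
  set Φ : Sym (Option ↥A) h → G :=
    fun s => (((s : Multiset (Option ↥A)).map e).map (fun o => o.getD 0)).sum with hΦ
  have hmem : ∀ s : Sym (Option ↥A) h,
      ∀ o ∈ ((s : Multiset (Option ↥A)).map e), o ∈ insert none (A.image some) := by
    intro s o ho
    rcases Multiset.mem_map.1 ho with ⟨a, -, rfl⟩
    match a with
    | none => simp [he]
    | some x => exact Finset.mem_insert_of_mem (Finset.mem_image.2 ⟨x, x.2, rfl⟩)
  have hcard : ∀ s : Sym (Option ↥A) h,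
      Multiset.card ((s : Multiset (Option ↥A)).map e) = h := by
    intro s; rw [Multiset.card_map]; exact s.2
  -- injectivity of Φ
  have hΦinj : Function.Injective Φ := by
    intro s₁ s₂ hval
    have hc := counts_eq hA (hmem s₁) (hmem s₂)
      (by rw [hcard s₁, hcard s₂]; omega) hval
    set p := (s₁ : Multiset (Option ↥A)).map e
    set q := (s₂ : Multiset (Option ↥A)).map e
    have hsump : ∑ o ∈ insert none (A.image some), p.count o = h := by
      rw [Multiset.sum_count_eq_card (fun o ho => hmem s₁ o ho), hcard s₁]
    have hsumq : ∑ o ∈ insert none (A.image some), q.count o = h := by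
      rw [Multiset.sum_count_eq_card (fun o ho => hmem s₂ o ho), hcard s₂]
    have hsomes : ∑ o ∈ A.image some, p.count o = ∑ o ∈ A.image some, q.count o := by
      rw [Finset.sum_image (fun x _ y _ hxy => Option.some_injective G hxy),
        Finset.sum_image (fun x _ y _ hxy => Option.some_injective G hxy)]
      exact Finset.sum_congr rfl fun x _ => hc x
    have hnone : p.count none = q.count none := by
      rw [Finset.sum_insert (by simp)] at hsump hsumq
      omega
    have hpq : p = q := by
      ext o
      match o with
      | none => exact hnone
      | some x => exact hc x
    exact Sym.coe_injective (Multiset.map_injective heinj hpq)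
  have hNinj : Function.Injective (fun s => -Φ s) := fun s₁ s₂ hv =>
    hΦinj (neg_injective hv)
  set P : Finset G := Finset.univ.image Φ with hP
  set N : Finset G := Finset.univ.image (fun s => -Φ s) with hN
  have hPcard : P.card = Fintype.card (Sym (Option ↥A) h) := by
    rw [hP, Finset.card_image_of_injective _ hΦinj, Finset.card_univ]
  have hNcard : N.card = Fintype.card (Sym (Option ↥A) h) := by
    rw [hN, Finset.card_image_of_injective _ hNinj, Finset.card_univ]
  have hinter : P ∩ N ⊆ {0} := by
    intro g hg
    rcases Finset.mem_inter.1 hg with ⟨hg1, hg2⟩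
    rcases Finset.mem_image.1 hg1 with ⟨s₁, -, rfl⟩
    rcases Finset.mem_image.1 hg2 with ⟨s₂, -, hs₂⟩
    have hz := counts_zero hA (hmem s₁) (hmem s₂)
      (by rw [hcard s₁, hcard s₂]; omega)
      (by show Φ s₁ + Φ s₂ = 0; rw [← hs₂]; abel)
    have : Φ s₁ = 0 := by
      rw [hΦ]
      simp only
      rw [val_eq A _ (hmem s₁)]
      refine Finset.sum_eq_zero fun x hx => ?_
      rw [(hz x).1, zero_smul]
    simp [this]
  have hunion : (P ∪ N).card ≤ Fintype.card G := Finset.card_le_univ _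
  have hiu := Finset.card_union_add_card_inter P N
  have hile : (P ∩ N).card ≤ 1 := le_trans (Finset.card_le_card hinter) (by simp)
  have hsymcard : Fintype.card (Sym (Option ↥A) h) = (A.card + h).choose h := by
    rw [Sym.card_sym_eq_choose, Fintype.card_option, Fintype.card_coe]
    congr 1
    omega
  omega


/-- `sIndep G t` is the maximum size of a `t`-independent subset of `G`
(it is `0` if `G` has no nonempty `t`-independent subset, since `∅` is
`t`-independent). -/
noncomputable def sIndep (G : Type*) [AddCommGroup G] (t : ℕ) : ℕ :=
  sSup {m | ∃ A : Finset G, IsTIndep t A ∧ A.card = m}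

theorem stmt0 {G : Type*} [AddCommGroup G] [Fintype G] (t : ℕ)
    (hn : 2 ≤ Fintype.card G) (ht : 2 ≤ t) :
    (∀ A : Finset G, IsTIndep t A →
      (A.card : ℝ) <
        ((1 : ℝ) / 2 * (Nat.factorial (t / 2) : ℝ) * (Fintype.card G : ℝ)) ^
          ((1 : ℝ) / ((t / 2 : ℕ) : ℝ))) ∧
    (sIndep G t : ℝ) <
      ((1 : ℝ) / 2 * (Nat.factorial (t / 2) : ℝ) * (Fintype.card G : ℝ)) ^
        ((1 : ℝ) / ((t / 2 : ℕ) : ℝ)) := by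
  classical
  have main : ∀ A : Finset G, IsTIndep t A →
      (A.card : ℝ) <
        ((1 : ℝ) / 2 * (Nat.factorial (t / 2) : ℝ) * (Fintype.card G : ℝ)) ^
          ((1 : ℝ) / ((t / 2 : ℕ) : ℝ)) := by
    intro A hA
    set h := t / 2 with hh
    have h1 : 1 ≤ h := by omega
    have hht : 2 * h ≤ t := by omega
    have hkey := key_count hA hht
    set m := A.card with hm
    have hchoose : m ^ h + h.factorial ≤ h.factorial * (m + h).choose h := by
      rw [← prod_eq_choose]
      exact pow_add_factorial_le m h h1
    have hfp := Nat.factorial_pos h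
    have hnat : 2 * m ^ h + h.factorial ≤ h.factorial * Fintype.card G := by
      have h2 : h.factorial * (2 * (m + h).choose h) ≤ h.factorial * (Fintype.card G + 1) :=
        Nat.mul_le_mul_left _ hkey
      nlinarith [hchoose, h2]
    have hlt : ((m : ℝ)) ^ (h : ℕ) <
        (1 : ℝ) / 2 * (h.factorial : ℝ) * (Fintype.card G : ℝ) := by
      have hs : (2 * m ^ h : ℕ) < (h.factorial * Fintype.card G : ℕ) := by omega
      have hc : (2 : ℝ) * (m : ℝ) ^ (h : ℕ) < (h.factorial : ℝ) * (Fintype.card G : ℝ) := by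
        exact_mod_cast hs
      linarith
    have hhpos : (0 : ℝ) < ((h : ℕ) : ℝ) := by exact_mod_cast h1
    have hmid : (m : ℝ) = ((m : ℝ) ^ (h : ℕ)) ^ ((1 : ℝ) / ((h : ℕ) : ℝ)) := by
      rw [← Real.rpow_natCast (m : ℝ) h, ← Real.rpow_mul (by positivity), mul_one_div,
        div_self (ne_of_gt hhpos), Real.rpow_one]
    rw [hmid]
    exact Real.rpow_lt_rpow (pow_nonneg (Nat.cast_nonneg _) _) hlt (by positivity)
  refine ⟨main, ?_⟩
  have hne : Set.Nonempty {m | ∃ A : Finset G, IsTIndep t A ∧ A.card = m} :=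
    ⟨0, ∅, fun c hc _ _ x => hc x (Finset.notMem_empty x), Finset.card_empty⟩
  have hbdd : BddAbove {m | ∃ A : Finset G, IsTIndep t A ∧ A.card = m} := by
    refine ⟨Fintype.card G, fun m hm => ?_⟩
    rcases hm with ⟨A, -, rfl⟩
    exact Finset.card_le_univ A
  obtain ⟨A, hA, hcard⟩ := Nat.sSup_mem hne hbdd
  have hc2 : A.card = sIndep G t := hcard
  rw [← hc2]
  exact main A hA
end

section
/- Let G be a finite abelian group of order n ≥ 2. Then the maximum size of a 2-independent subset of G equals (n - |Ord(G,2)|)/2, where Ord(G,2) = {x ∈ G : 2x = 0}. -/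
open Finset

lemma indep2_iff {G : Type*} [AddCommGroup G] (A : Finset G) :
    IsTIndep 2 A ↔ (∀ x ∈ A, 2 • x ≠ 0) ∧ ∀ x ∈ A, -x ∉ A := by
  classical
  constructor
  · intro h
    have h2 : ∀ x ∈ A, 2 • x ≠ 0 := by
      intro x hx hx2
      have := h (fun y => if y = x then 2 else 0) ?_ ?_ ?_ x
      · simp at this
      · intro y hy
        simp only [ite_eq_right_iff]
        intro e; exact absurd (e ▸ hx) hy
      · simp only [apply_ite abs, abs_zero]
        rw [Finset.sum_ite_eq' A x (fun _ => |(2:ℤ)|)]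
        simp [hx]
      · simp only [ite_smul, zero_smul]
        rw [Finset.sum_ite_eq' A x (fun y => (2:ℤ) • y)]
        simp [hx]
        rw [two_zsmul]
        rw [two_nsmul] at hx2
        exact hx2
    refine ⟨h2, ?_⟩
    intro x hx hnx
    have hxne : x ≠ -x := by
      intro e
      exact h2 x hx (by rw [two_nsmul]; nth_rewrite 2 [e]; simp)
    have := h (fun y => (if y = x then 1 else 0) + (if y = -x then 1 else 0)) ?_ ?_ ?_ x
    · simp [hxne] at this
    · intro y hy
      have h1 : y ≠ x := fun e => hy (e ▸ hx)
      have h2' : y ≠ -x := fun e => hy (e ▸ hnx)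
      simp [h1, h2']
    · have hnn : ∀ y : G, (0:ℤ) ≤ (if y = x then 1 else 0) + (if y = -x then 1 else 0) := by
        intro y; positivity
      calc ∑ y ∈ A, |(if y = x then (1:ℤ) else 0) + (if y = -x then 1 else 0)|
          = ∑ y ∈ A, ((if y = x then (1:ℤ) else 0) + (if y = -x then 1 else 0)) := by
            refine Finset.sum_congr rfl fun y _ => abs_of_nonneg (hnn y)
        _ ≤ 2 := by
            rw [Finset.sum_add_distrib, Finset.sum_ite_eq' A x (fun _ => (1:ℤ)),
              Finset.sum_ite_eq' A (-x) (fun _ => (1:ℤ))]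
            simp [hx, hnx]
    · simp only [add_smul, ite_smul, zero_smul, one_smul, Finset.sum_add_distrib]
      rw [Finset.sum_ite_eq' A x (fun y => y), Finset.sum_ite_eq' A (-x) (fun y => y)]
      simp [hx, hnx]
  · rintro ⟨h2, hneg⟩ c hsupp hle hsum x
    by_contra hcx
    have hxA : x ∈ A := by
      by_contra h; exact hcx (hsupp x h)
    set T := A.filter (fun y => c y ≠ 0) with hT
    have hxT : x ∈ T := Finset.mem_filter.2 ⟨hxA, hcx⟩
    have hTsub : T ⊆ A := Finset.filter_subset _ _
    have habs : ∑ y ∈ T, |c y| = ∑ y ∈ A, |c y| := by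
      refine Finset.sum_filter_of_ne fun y _ hy => ?_
      intro h0; exact hy (by simp [h0])
    have hsmul : ∑ y ∈ T, c y • y = 0 := by
      rw [Finset.sum_filter_of_ne fun y _ hy => ?_]
      · exact hsum
      · intro h0; exact hy (by simp [h0])
    have hone : ∀ y ∈ T, (1:ℤ) ≤ |c y| := by
      intro y hy
      exact Int.one_le_abs (Finset.mem_filter.1 hy).2
    have hcard2 : (T.card : ℤ) ≤ 2 := by
      calc (T.card : ℤ) = ∑ _y ∈ T, (1:ℤ) := by simp
        _ ≤ ∑ y ∈ T, |c y| := Finset.sum_le_sum hone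
        _ = ∑ y ∈ A, |c y| := habs
        _ ≤ 2 := by exact_mod_cast hle
    have hcardl : 1 ≤ T.card := Finset.card_pos.2 ⟨x, hxT⟩
    have hcr : T.card = 1 ∨ T.card = 2 := by omega
    rcases hcr with h1 | h1
    · obtain ⟨a, ha⟩ := Finset.card_eq_one.1 h1
      have haT : a ∈ T := ha ▸ Finset.mem_singleton_self a
      have haA : a ∈ A := hTsub haT
      have hca : c a ≠ 0 := (Finset.mem_filter.1 haT).2
      have hsm : c a • a = 0 := by
        have := hsmul; rw [ha, Finset.sum_singleton] at this; exact this
      have hab : |c a| ≤ 2 := by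
        have := habs.trans_le hle
        rw [ha, Finset.sum_singleton] at this; exact this
      obtain ⟨hl, hr⟩ := abs_le.1 hab
      have haa := h2 a haA
      rw [two_nsmul] at haa
      have hcases : c a = 1 ∨ c a = -1 ∨ c a = 2 ∨ c a = -2 := by omega
      rcases hcases with e | e | e | e <;> rw [e] at hsm
      · rw [one_smul] at hsm; exact haa (by rw [hsm]; simp)
      · rw [neg_smul, neg_eq_zero, one_smul] at hsm
        exact haa (by rw [hsm]; simp)
      · rw [two_zsmul] at hsm; exact haa hsm
      · rw [neg_smul, neg_eq_zero, two_zsmul] at hsm; exact haa hsm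
    · obtain ⟨a, b, hab, hTab⟩ := Finset.card_eq_two.1 h1
      have haT : a ∈ T := hTab ▸ by simp
      have hbT : b ∈ T := hTab ▸ by simp
      have haA : a ∈ A := hTsub haT
      have hbA : b ∈ A := hTsub hbT
      have hca : c a ≠ 0 := (Finset.mem_filter.1 haT).2
      have hcb : c b ≠ 0 := (Finset.mem_filter.1 hbT).2
      have hsm : c a • a + c b • b = 0 := by
        have := hsmul; rw [hTab, Finset.sum_pair hab] at this; exact this
      have habsum : |c a| + |c b| ≤ 2 := by
        have := habs.trans_le hle
        rw [hTab, Finset.sum_pair hab] at this; exact this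
      have h1a : |c a| = 1 := by
        have := Int.one_le_abs hca
        have := Int.one_le_abs hcb
        omega
      have h1b : |c b| = 1 := by
        have := Int.one_le_abs hca
        have := Int.one_le_abs hcb
        omega
      rcases (abs_eq (by norm_num : (0:ℤ) ≤ 1)).1 h1a with ea | ea <;>
        rcases (abs_eq (by norm_num : (0:ℤ) ≤ 1)).1 h1b with eb | eb <;>
          rw [ea, eb] at hsm <;>
            simp only [one_smul, neg_smul, neg_one_smul] at hsm
      · exact hneg a haA ((eq_neg_of_add_eq_zero_right hsm) ▸ hbA)
      · exact hab (by rwa [← sub_eq_add_neg, sub_eq_zero] at hsm)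
      · exact hab (by
          have : b = a := by
            have := eq_neg_of_add_eq_zero_right hsm
            rw [this]; simp
          exact this.symm)
      · refine hneg a haA ?_
        have : -a = b := by
          have h' : a + b = 0 := by
            have := hsm
            rw [← neg_add] at this
            exact neg_eq_zero.1 this
          exact (eq_neg_of_add_eq_zero_right h').symm
        rwa [this]

theorem stmt4 {G : Type*} [AddCommGroup G] [Fintype G]
    (hn : 2 ≤ Fintype.card G) :
    2 * sIndep G 2 = Fintype.card G - Nat.card {x : G // 2 • x = 0} := by
  classical
  set n := Fintype.card G with hn'
  set S : Finset G := Finset.univ.filter (fun x => 2 • x ≠ 0) with hS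
  have hk : Nat.card {x : G // 2 • x = 0} + S.card = n := by
    rw [Nat.card_eq_fintype_card, Fintype.card_subtype]
    rw [hS, hn']
    exact Finset.card_filter_add_card_filter_not _
  have hmemS : ∀ x : G, x ∈ S ↔ 2 • x ≠ 0 := by
    intro x; simp [hS]
  have hSne : ∀ x ∈ S, x ≠ -x := by
    intro x hx e
    exact (hmemS x).1 hx (by rw [two_nsmul]; nth_rewrite 2 [e]; simp)
  have hsn : ∀ x : G, (2:ℕ) • (-x) = -((2:ℕ) • x) := fun x => neg_nsmul x 2
  have hnegS : ∀ x, x ∈ S ↔ -x ∈ S := by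
    intro x
    rw [hmemS, hmemS, hsn, neg_ne_zero]
  set f : G → ℕ := fun x => (Fintype.equivFin G x : ℕ) with hf
  have hfinj : Function.Injective f := by
    intro a b hab
    exact (Fintype.equivFin G).injective (Fin.ext hab)
  set A : Finset G := S.filter (fun x => f x < f (-x)) with hA
  set B : Finset G := S.filter (fun x => f (-x) < f x) with hB
  have hBimage : B = A.image Neg.neg := by
    ext y
    simp only [hB, hA, Finset.mem_image, Finset.mem_filter]
    constructor
    · rintro ⟨hyS, hy⟩
      exact ⟨-y, ⟨(hnegS y).1 hyS, by simpa using hy⟩, by simp⟩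
    · rintro ⟨z, ⟨hzS, hz⟩, rfl⟩
      exact ⟨(hnegS z).1 hzS, by simpa using hz⟩
  have hcardAB : B.card = A.card := by
    rw [hBimage]
    exact Finset.card_image_of_injective _ neg_injective
  have hfe : S.filter (fun x => ¬ f x < f (-x)) = B := by
    apply Finset.filter_congr
    intro x hx
    have hne : f x ≠ f (-x) := fun e => hSne x hx (hfinj e)
    simp only [not_lt]
    exact ⟨fun h => lt_of_le_of_ne h (Ne.symm hne), fun h => le_of_lt h⟩
  have hdisjAB : Disjoint A B := by
    rw [Finset.disjoint_left]
    intro y hy hy'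
    have h1 := (Finset.mem_filter.1 (hA ▸ hy)).2
    have h2 := (Finset.mem_filter.1 (hB ▸ hy')).2
    omega
  have hunion : A ∪ B = S := by
    ext x
    simp only [hA, hB, Finset.mem_union, Finset.mem_filter]
    constructor
    · rintro (⟨h, _⟩ | ⟨h, _⟩) <;> exact h
    · intro hx
      have hne : f x ≠ f (-x) := fun e => hSne x hx (hfinj e)
      rcases lt_or_gt_of_ne hne with h | h
      · exact Or.inl ⟨hx, h⟩
      · exact Or.inr ⟨hx, h⟩
  have hSAB : S.card = A.card + B.card := by
    rw [← hunion, Finset.card_union_of_disjoint hdisjAB]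
  have hAindep : IsTIndep 2 A := by
    rw [indep2_iff]
    constructor
    · intro x hx
      exact (hmemS x).1 (Finset.mem_filter.1 (hA ▸ hx)).1
    · intro x hx hnx
      have h1 := (Finset.mem_filter.1 (hA ▸ hx)).2
      have h2 := (Finset.mem_filter.1 (hA ▸ hnx)).2
      simp only [neg_neg] at h2
      omega
  -- upper bound for any 2-independent set
  have hub : ∀ A' : Finset G, IsTIndep 2 A' → 2 * A'.card ≤ S.card := by
    intro A' hA'
    rw [indep2_iff] at hA'
    obtain ⟨h2, hneg⟩ := hA'
    have hsub : A' ∪ A'.image Neg.neg ⊆ S := by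
      intro y hy
      rcases Finset.mem_union.1 hy with hy | hy
      · exact (hmemS y).2 (h2 y hy)
      · obtain ⟨z, hz, rfl⟩ := Finset.mem_image.1 hy
        exact (hnegS z).1 ((hmemS z).2 (h2 z hz))
    have hdisj : Disjoint A' (A'.image Neg.neg) := by
      rw [Finset.disjoint_left]
      intro y hy hy'
      obtain ⟨z, hz, rfl⟩ := Finset.mem_image.1 hy'
      exact hneg z hz (by simpa using hy)
    have := Finset.card_le_card hsub
    rw [Finset.card_union_of_disjoint hdisj,
      Finset.card_image_of_injective _ neg_injective] at this
    omega
  have hset : sIndep G 2 = A.card := by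
    unfold sIndep
    apply le_antisymm
    · refine csSup_le ⟨A.card, A, hAindep, rfl⟩ ?_
      rintro m ⟨A', hA', rfl⟩
      have := hub A' hA'
      omega
    · apply le_csSup
      · refine ⟨A.card, ?_⟩
        rintro m ⟨A', hA', rfl⟩
        have := hub A' hA'
        omega
      · exact ⟨A, hAindep, rfl⟩
  rw [hset]
  omega
end

section
/- Let G be a finite abelian group of order n ≥ 2. If every element x of G satisfies 2x = 0 (i.e., G is an elementary abelian 2-group), then G has no nonempty 2-independent subset, so s(G,2) = 0. Otherwise, n/4 ≤ s(G,2) ≤ n/2. -/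
section Aux
variable {G : Type*} [AddCommGroup G]

lemma isTIndep_two_iff (A : Finset G) :
    IsTIndep 2 A ↔ ∀ a ∈ A, ∀ b ∈ A, a + b ≠ 0 := by
  classical
  constructor
  · intro h a ha b hb hab
    by_cases hab' : a = b
    · subst hab'
      set c : G → ℤ := fun x => if x = a then 2 else 0 with hc
      have h1 : ∀ x ∉ A, c x = 0 := by
        intro x hx
        simp only [hc]
        rw [if_neg]; intro hxa; exact hx (hxa ▸ ha)
      have h2 : (∑ x ∈ A, |c x|) ≤ (2 : ℤ) := by
        rw [← Finset.sum_subset (Finset.singleton_subset_iff.mpr ha)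
          (by intro x _ hx; simp only [hc]; rw [if_neg, abs_zero]; simpa using hx)]
        simp [hc]
      have h3 : (∑ x ∈ A, c x • x) = 0 := by
        rw [← Finset.sum_subset (Finset.singleton_subset_iff.mpr ha)
          (by intro x _ hx; simp only [hc]; rw [if_neg, zero_smul]; simpa using hx)]
        rw [Finset.sum_singleton]
        have : c a = 2 := by simp [hc]
        rw [this, two_zsmul]; exact hab
      have := h c h1 (by exact_mod_cast h2) h3 a
      simp [hc] at this
    · set c : G → ℤ := fun x => if x = a ∨ x = b then 1 else 0 with hc
      have hsub : ({a, b} : Finset G) ⊆ A := by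
        intro x hx; rcases Finset.mem_insert.mp hx with rfl | hx
        · exact ha
        · rcases Finset.mem_singleton.mp hx with rfl; exact hb
      have h1 : ∀ x ∉ A, c x = 0 := by
        intro x hx
        simp only [hc]
        rw [if_neg]; rintro (rfl | rfl); exact hx ha; exact hx hb
      have h2 : (∑ x ∈ A, |c x|) ≤ (2 : ℤ) := by
        rw [← Finset.sum_subset hsub
          (by intro x _ hx; simp only [hc]; rw [if_neg, abs_zero];
              simp only [Finset.mem_insert, Finset.mem_singleton] at hx; exact hx)]
        rw [Finset.sum_pair hab']
        simp [hc]
      have h3 : (∑ x ∈ A, c x • x) = 0 := by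
        rw [← Finset.sum_subset hsub
          (by intro x _ hx; simp only [hc]; rw [if_neg, zero_smul];
              simp only [Finset.mem_insert, Finset.mem_singleton] at hx; exact hx)]
        rw [Finset.sum_pair hab']
        simp only [hc, if_pos (Or.inl rfl), if_pos (Or.inr rfl), one_smul]
        exact hab
      have := h c h1 (by exact_mod_cast h2) h3 a
      simp [hc] at this
  · intro H c h1 h2 h3 x
    by_contra hx
    have hxA : x ∈ A := by by_contra h; exact hx (h1 x h)
    set S := A.filter (fun y => c y ≠ 0) with hS
    have hsum : ∑ y ∈ S, c y • y = 0 := by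
      rw [hS, Finset.sum_filter_of_ne]
      · exact h3
      · intro y _ hy hcy; exact hy (by rw [hcy, zero_smul])
    have habs : ∑ y ∈ S, |c y| ≤ 2 := by
      refine le_trans ?_ h2
      apply Finset.sum_le_sum_of_subset_of_nonneg (Finset.filter_subset _ _)
      intro y _ _; exact abs_nonneg _
    have hcardS : (S.card : ℤ) ≤ ∑ y ∈ S, |c y| := by
      have := Finset.card_nsmul_le_sum S (fun y => |c y|) 1
        (fun y hy => Int.one_le_abs ((Finset.mem_filter.mp hy).2))
      simpa using this
    have hcard2 : S.card ≤ 2 := by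
      have : (S.card : ℤ) ≤ 2 := le_trans hcardS habs
      exact_mod_cast this
    have hxS : x ∈ S := Finset.mem_filter.mpr ⟨hxA, hx⟩
    have hSne : S.card ≠ 0 := fun h => by
      rw [Finset.card_eq_zero] at h; rw [h] at hxS; exact absurd hxS (Finset.notMem_empty x)
    have hc12 : S.card = 1 ∨ S.card = 2 := by omega
    rcases hc12 with h | h
    · -- card = 1
      obtain ⟨a, hSa⟩ := Finset.card_eq_one.mp h
      have haS : a ∈ S := hSa ▸ Finset.mem_singleton_self a
      have haA : a ∈ A := (Finset.mem_filter.mp haS).1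
      have hca : c a ≠ 0 := (Finset.mem_filter.mp haS).2
      have heq : c a • a = 0 := by rw [hSa, Finset.sum_singleton] at hsum; exact hsum
      have hle : |c a| ≤ 2 := by rw [hSa, Finset.sum_singleton] at habs; exact habs
      obtain ⟨h1b, h2b⟩ := abs_le.mp hle
      apply H a haA a haA
      set k := c a with hk
      interval_cases k
      · have : (2:ℤ) • a = 0 := by rwa [show ((-2:ℤ)) = -2 from rfl, neg_smul, neg_eq_zero] at heq
        rw [two_zsmul] at this; exact this
      · have : a = 0 := by simpa using heq
        rw [this, add_zero]
      · exact absurd rfl hca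
      · have : a = 0 := by simpa using heq
        rw [this, add_zero]
      · rw [two_zsmul] at heq; exact heq
    · -- card = 2
      obtain ⟨a, b, hab, hSab⟩ := Finset.card_eq_two.mp h
      have haS : a ∈ S := hSab ▸ Finset.mem_insert_self a {b}
      have hbS : b ∈ S := hSab ▸ Finset.mem_insert_of_mem (Finset.mem_singleton_self b)
      have haA : a ∈ A := (Finset.mem_filter.mp haS).1
      have hbA : b ∈ A := (Finset.mem_filter.mp hbS).1
      have hca : c a ≠ 0 := (Finset.mem_filter.mp haS).2
      have hcb : c b ≠ 0 := (Finset.mem_filter.mp hbS).2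
      have heq : c a • a + c b • b = 0 := by
        rw [hSab, Finset.sum_pair hab] at hsum; exact hsum
      have hle : |c a| + |c b| ≤ 2 := by
        rw [hSab, Finset.sum_pair hab] at habs; exact habs
      have ha1 : |c a| = 1 := by
        have := Int.one_le_abs hca; have := Int.one_le_abs hcb; omega
      have hb1 : |c b| = 1 := by
        have := Int.one_le_abs hca; have := Int.one_le_abs hcb; omega
      rcases abs_eq (by norm_num : (0:ℤ) ≤ 1) |>.mp ha1 with ha' | ha' <;>
        rcases abs_eq (by norm_num : (0:ℤ) ≤ 1) |>.mp hb1 with hb' | hb' <;>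
          rw [ha', hb'] at heq <;> simp only [one_smul, neg_smul, neg_one_smul] at heq
      · exact H a haA b hbA heq
      · have h2' : a - b = 0 := by rw [sub_eq_add_neg]; exact heq
        exact hab (sub_eq_zero.mp h2')
      · have h2' : b - a = 0 := by rw [sub_eq_add_neg, add_comm]; exact heq
        exact hab (sub_eq_zero.mp h2').symm
      · have h2' : -(a + b) = 0 := by rw [neg_add]; exact heq
        exact H a haA b hbA (neg_eq_zero.mp h2')

lemma pair_split [DecidableEq G] : ∀ (n : ℕ) (T : Finset G), T.card ≤ n →
    (∀ x ∈ T, -x ∈ T) → (∀ x ∈ T, x + x ≠ 0) →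
    ∃ A : Finset G, A ⊆ T ∧ (∀ a ∈ A, ∀ b ∈ A, a + b ≠ 0) ∧ 2 * A.card = T.card := by
  intro n
  induction n with
  | zero =>
    intro T hT _ _
    refine ⟨∅, by simp, by simp, ?_⟩
    rw [Finset.card_eq_zero.mp (Nat.le_zero.mp hT)]; simp
  | succ n ih =>
    intro T hT hneg h0
    rcases T.eq_empty_or_nonempty with rfl | ⟨x, hx⟩
    · exact ⟨∅, by simp, by simp, by simp⟩
    · have hxneg : -x ∈ T := hneg x hx
      have hxx : x ≠ -x := by
        intro h
        apply h0 x hx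
        nth_rewrite 2 [h]
        exact add_neg_cancel x
      set T' := T \ {x, -x} with hT'
      have hsub : T' ⊆ T := Finset.sdiff_subset
      have hpairsub : ({x, -x} : Finset G) ⊆ T := by
        intro y hy
        rcases Finset.mem_insert.mp hy with rfl | hy
        · exact hx
        · rcases Finset.mem_singleton.mp hy with rfl; exact hxneg
      have hcard' : T'.card = T.card - 2 := by
        rw [hT', Finset.card_sdiff_of_subset hpairsub, Finset.card_pair hxx]
      have hT2 : 2 ≤ T.card := by
        calc 2 = ({x, -x} : Finset G).card := (Finset.card_pair hxx).symm
        _ ≤ T.card := Finset.card_le_card hpairsub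
      have hneg' : ∀ y ∈ T', -y ∈ T' := by
        intro y hy
        rw [hT', Finset.mem_sdiff] at hy ⊢
        obtain ⟨hyT, hyp⟩ := hy
        refine ⟨hneg y hyT, ?_⟩
        intro hmem
        apply hyp
        simp only [Finset.mem_insert, Finset.mem_singleton] at hmem ⊢
        rcases hmem with h | h
        · right; rw [← h, neg_neg]
        · left; exact neg_injective h
      obtain ⟨A, hAsub, hAprop, hAcard⟩ := ih T' (by omega)
        hneg' (fun y hy => h0 y (hsub hy))
      have hxT' : x ∉ T' := by
        rw [hT', Finset.mem_sdiff]
        push_neg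
        intro _
        exact Finset.mem_insert_self x {-x}
      have hxA : x ∉ A := fun h => hxT' (hAsub h)
      refine ⟨insert x A, ?_, ?_, ?_⟩
      · intro y hy
        rcases Finset.mem_insert.mp hy with rfl | hy
        · exact hx
        · exact hsub (hAsub hy)
      · intro a ha b hb
        rcases Finset.mem_insert.mp ha with h1 | h1 <;>
          rcases Finset.mem_insert.mp hb with h2 | h2
        · rw [h1, h2]; exact h0 x hx
        · rw [h1]
          intro hsum
          have hbx : b = -x := eq_neg_of_add_eq_zero_right hsum
          have hbT' := hAsub h2
          rw [hT', Finset.mem_sdiff] at hbT'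
          exact hbT'.2 (by simp [hbx])
        · rw [h2]
          intro hsum
          have hax : a = -x := eq_neg_of_add_eq_zero_left hsum
          have haT' := hAsub h1
          rw [hT', Finset.mem_sdiff] at haT'
          exact haT'.2 (by simp [hax])
        · exact hAprop a h1 b h2
      · rw [Finset.card_insert_of_notMem hxA]
        omega

lemma indep_card_le [Fintype G] (A : Finset G)
    (hA : ∀ a ∈ A, ∀ b ∈ A, a + b ≠ 0) : 2 * A.card ≤ Fintype.card G := by
  classical
  set B := A.image (fun x => -x) with hB
  have hdisj : Disjoint A B := by
    rw [Finset.disjoint_left]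
    intro y hyA hyB
    obtain ⟨b, hbA, hby⟩ := Finset.mem_image.mp hyB
    exact hA b hbA y hyA (by rw [← hby, add_neg_cancel])
  have hBcard : B.card = A.card := Finset.card_image_of_injective A neg_injective
  calc 2 * A.card = A.card + B.card := by omega
  _ = (A ∪ B).card := (Finset.card_union_of_disjoint hdisj).symm
  _ ≤ Fintype.card G := Finset.card_le_univ _

def twoTorsion (G : Type*) [AddCommGroup G] : AddSubgroup G where
  carrier := {x | x + x = 0}
  zero_mem' := by simp
  add_mem' := by
    intro a b ha hb
    simp only [Set.mem_setOf_eq] at *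
    calc a + b + (a + b) = (a + a) + (b + b) := by abel
    _ = 0 := by rw [ha, hb, add_zero]
  neg_mem' := by
    intro a ha
    simp only [Set.mem_setOf_eq] at *
    rw [← neg_add, ha, neg_zero]


end Aux

theorem stmt5 {G : Type*} [AddCommGroup G] [Fintype G]
    (hn : 2 ≤ Fintype.card G) :
    ((∀ x : G, 2 • x = 0) → sIndep G 2 = 0) ∧
    (¬ (∀ x : G, 2 • x = 0) →
      (Fintype.card G : ℚ) / 4 ≤ (sIndep G 2 : ℚ) ∧
      (sIndep G 2 : ℚ) ≤ (Fintype.card G : ℚ) / 2) := by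
  classical
  set Sset := {m | ∃ A : Finset G, IsTIndep 2 A ∧ A.card = m} with hSset
  have hempty : (0 : ℕ) ∈ Sset := by
    refine ⟨∅, ?_, rfl⟩
    intro c hc _ _ x
    exact hc x (Finset.notMem_empty x)
  have hbdd : BddAbove Sset := by
    refine ⟨Fintype.card G, ?_⟩
    rintro m ⟨A, _, rfl⟩
    exact Finset.card_le_univ A
  constructor
  · intro h2
    have hset : Sset = {0} := by
      ext m
      simp only [hSset, Set.mem_setOf_eq, Set.mem_singleton_iff]
      constructor
      · rintro ⟨A, hA, rfl⟩
        rw [isTIndep_two_iff] at hA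
        rw [Finset.card_eq_zero]
        by_contra hne
        obtain ⟨a, ha⟩ := Finset.nonempty_iff_ne_empty.mpr hne
        exact hA a ha a ha (by rw [← two_nsmul]; exact h2 a)
      · rintro rfl
        exact hempty
    rw [sIndep, ← hSset, hset, csSup_singleton]
  · intro h2
    push_neg at h2
    obtain ⟨x0, hx0⟩ := h2
    have hx0' : x0 + x0 ≠ 0 := by rw [← two_nsmul]; exact hx0
    set n := Fintype.card G with hn'
    set T := Finset.univ.filter (fun x : G => x + x ≠ 0) with hT
    set Tc := Finset.univ.filter (fun x : G => x + x = 0) with hTc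
    set k := Tc.card with hk
    have hTk : Tc.card + T.card = n := by
      rw [hTc, hT, hn', ← Finset.card_univ]
      exact Finset.card_filter_add_card_filter_not _
    -- k divides n
    have hkcard : Nat.card (twoTorsion G) = k := by
      rw [hk, hTc, Nat.card_eq_fintype_card]
      exact Fintype.card_subtype _
    have hdvd : k ∣ n := by
      rw [← hkcard, hn', ← Nat.card_eq_fintype_card]
      exact AddSubgroup.card_addSubgroup_dvd_card _
    have hklt : k < n := by
      rw [hk, hn', ← Finset.card_univ]
      apply Finset.card_lt_card
      rw [Finset.ssubset_iff_subset_ne]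
      refine ⟨Finset.subset_univ _, ?_⟩
      intro h
      have : x0 ∈ Tc := h ▸ Finset.mem_univ x0
      rw [hTc, Finset.mem_filter] at this
      exact hx0' this.2
    have hkpos : 0 < k := by
      rw [hk, hTc]
      refine Finset.card_pos.mpr ⟨0, ?_⟩
      simp
    have h2k : 2 * k ≤ n := by
      obtain ⟨m, hm⟩ := hdvd
      have hm2 : 2 ≤ m := by
        rcases m with _ | _ | m
        · omega
        · omega
        · omega
      calc 2 * k = k * 2 := by ring
      _ ≤ k * m := Nat.mul_le_mul_left k hm2
      _ = n := hm.symm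
    -- construct a large independent set
    obtain ⟨A, hAsub, hAprop, hAcard⟩ := pair_split T.card T le_rfl
      (by
        intro x hxT
        rw [hT, Finset.mem_filter] at hxT ⊢
        refine ⟨Finset.mem_univ _, ?_⟩
        intro h
        apply hxT.2
        have : -(x + x) = 0 := by rw [neg_add]; exact h
        exact neg_eq_zero.mp this)
      (by intro x hxT; rw [hT, Finset.mem_filter] at hxT; exact hxT.2)
    have hmem : A.card ∈ Sset := ⟨A, (isTIndep_two_iff A).mpr hAprop, rfl⟩
    have hlow : A.card ≤ sIndep G 2 := le_csSup hbdd hmem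
    have hup : ∀ m ∈ Sset, 2 * m ≤ n := by
      rintro m ⟨B, hB, rfl⟩
      exact indep_card_le B ((isTIndep_two_iff B).mp hB)
    have hups : 2 * sIndep G 2 ≤ n := by
      have hle : sIndep G 2 ≤ n / 2 := by
        apply csSup_le ⟨0, hempty⟩
        intro m hm
        have := hup m hm
        omega
      omega
    have hlows : n ≤ 4 * sIndep G 2 := by
      have h4 : n ≤ 4 * A.card := by omega
      omega
    constructor
    · rw [div_le_iff₀ (by norm_num : (0:ℚ) < 4)]
      calc (n : ℚ) ≤ (4 * sIndep G 2 : ℕ) := by exact_mod_cast hlows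
      _ = (sIndep G 2 : ℚ) * 4 := by push_cast; ring
    · rw [le_div_iff₀ (by norm_num : (0:ℚ) < 2)]
      calc (sIndep G 2 : ℚ) * 2 = ((2 * sIndep G 2 : ℕ) : ℚ) := by push_cast; ring
      _ ≤ (n : ℚ) := by exact_mod_cast hups
end

section
/- Let G be a finite abelian group of order n ≥ 2. If every element x of G satisfies px = 0 for p = 2 or for p = 3 (i.e., G is an elementary abelian 2-group or an elementary abelian 3-group), then G has no nonempty 3-independent subset, so s(G,3) = 0. Otherwise, n/9 ≤ s(G,3) ≤ n/4. -/
open scoped DirectSum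

def Good {G : Type*} [AddCommGroup G] (A : Finset G) : Prop :=
  ∀ x ∈ A, ∀ y ∈ A, ∀ z ∈ A, x + y ≠ z ∧ x + y ≠ -z ∧ x + y ≠ 0

section Pieces

variable {G : Type*} [AddCommGroup G]

lemma sum_indicator_smul [DecidableEq G] (A : Finset G) {a : G} (ha : a ∈ A) (v : ℤ) :
    ∑ w ∈ A, (if w = a then v else 0) • w = v • a := by
  rw [Finset.sum_eq_single a (fun b _ hb => by simp [hb]) (fun h => absurd ha h)]
  simp

lemma sum_indicator [DecidableEq G] (A : Finset G) {a : G} (ha : a ∈ A) (v : ℤ) :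
    ∑ w ∈ A, (if w = a then v else 0) = v := by
  rw [Finset.sum_eq_single a (fun b _ hb => by simp [hb]) (fun h => absurd ha h)]
  simp

lemma indep_combo {A : Finset G} (h : IsTIndep 3 A) {x y z : G}
    (hx : x ∈ A) (hy : y ∈ A) (hz : z ∈ A) (e : ℤ) (he : |e| ≤ 1)
    (heq : x + y + e • z = 0) : False := by
  classical
  set c : G → ℤ := fun w =>
    (if w = x then 1 else 0) + (if w = y then 1 else 0) + e * (if w = z then 1 else 0) with hc
  have hsupp : ∀ w ∉ A, c w = 0 := by
    intro w hw
    have h1 : w ≠ x := fun h => hw (h ▸ hx)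
    have h2 : w ≠ y := fun h => hw (h ▸ hy)
    have h3 : w ≠ z := fun h => hw (h ▸ hz)
    simp [hc, h1, h2, h3]
  have habs : (∑ w ∈ A, |c w|) ≤ (3 : ℤ) := by
    have hle : ∀ w ∈ A, |c w| ≤
        (if w = x then 1 else 0) + (if w = y then 1 else 0) + (if w = z then 1 else 0) := by
      intro w _
      refine le_trans (abs_add_three _ _ _) ?_
      gcongr
      · exact le_of_eq (by split_ifs <;> simp)
      · exact le_of_eq (by split_ifs <;> simp)
      · rw [abs_mul]
        split_ifs
        · simpa using he
        · simp
    refine le_trans (Finset.sum_le_sum hle) ?_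
    rw [Finset.sum_add_distrib, Finset.sum_add_distrib,
      sum_indicator A hx 1, sum_indicator A hy 1, sum_indicator A hz 1]
    norm_num
  have hsum : (∑ w ∈ A, c w • w) = 0 := by
    have : ∀ w ∈ A, c w • w =
        (if w = x then (1:ℤ) else 0) • w + (if w = y then (1:ℤ) else 0) • w
          + (if w = z then e else 0) • w := by
      intro w _
      simp only [hc]
      rw [← add_smul, ← add_smul]
      congr 1
      split_ifs <;> ring
    rw [Finset.sum_congr rfl this, Finset.sum_add_distrib, Finset.sum_add_distrib,
      sum_indicator_smul A hx, sum_indicator_smul A hy, sum_indicator_smul A hz]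
    simpa using heq
  have hzero := h c hsupp (by exact_mod_cast habs) hsum
  have : (∑ w ∈ A, c w) = 0 := by simp [hzero]
  rw [show (∑ w ∈ A, c w) = 2 + e from ?_] at this
  · have := abs_le.mp he
    omega
  · simp only [hc]
    rw [Finset.sum_add_distrib, Finset.sum_add_distrib, ← Finset.mul_sum,
      sum_indicator A hx 1, sum_indicator A hy 1, sum_indicator A hz 1]
    ring

lemma isTIndep_good {A : Finset G} (h : IsTIndep 3 A) : Good A := by
  intro x hx y hy z hz
  refine ⟨?_, ?_, ?_⟩
  · intro he
    exact indep_combo h hx hy hz (-1) (by norm_num) (by rw [neg_one_zsmul, he]; abel)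
  · intro he
    exact indep_combo h hx hy hz 1 (by norm_num) (by rw [one_zsmul, he]; abel)
  · intro he
    exact indep_combo h hx hy hz 0 (by norm_num) (by rw [zero_zsmul, he]; abel)

lemma good_isTIndep {A : Finset G} (hA : Good A) : IsTIndep 3 A := by
  classical
  intro c hsupp habs hsum
  by_contra hcon
  push_neg at hcon
  obtain ⟨a, ha⟩ := hcon
  set T := A.filter (fun x => c x ≠ 0) with hTdef
  have hTsub : T ⊆ A := Finset.filter_subset _ _
  have haA : a ∈ A := by
    by_contra h
    exact ha (hsupp a h)
  have haT : a ∈ T := Finset.mem_filter.mpr ⟨haA, ha⟩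
  have hmem : ∀ x ∈ T, x ∈ A ∧ c x ≠ 0 := fun x hx => Finset.mem_filter.mp hx
  have habsT : (∑ x ∈ T, |c x|) ≤ 3 := by
    refine le_trans (Finset.sum_le_sum_of_subset_of_nonneg hTsub
      (fun i _ _ => abs_nonneg _)) (by exact_mod_cast habs)
  have hsumT : (∑ x ∈ T, c x • x) = 0 := by
    rw [Finset.sum_subset hTsub]
    · exact hsum
    · intro x hx hxT
      have : c x = 0 := by
        by_contra h
        exact hxT (Finset.mem_filter.mpr ⟨hx, h⟩)
      simp [this]
  have hone : ∀ x ∈ T, 1 ≤ |c x| := fun x hx => Int.one_le_abs (hmem x hx).2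
  have hcard3 : T.card ≤ 3 := by
    have h1 : (T.card : ℤ) ≤ ∑ x ∈ T, |c x| := by
      calc (T.card : ℤ) = ∑ _x ∈ T, (1 : ℤ) := by simp
      _ ≤ ∑ x ∈ T, |c x| := Finset.sum_le_sum hone
    omega
  have hcard1 : 1 ≤ T.card := Finset.card_pos.mpr ⟨a, haT⟩
  -- case analysis on the size of the support
  interval_cases hc : T.card
  · -- card 1
    obtain ⟨u, hu⟩ := Finset.card_eq_one.mp hc
    have huT : u ∈ T := by rw [hu]; exact Finset.mem_singleton_self u
    obtain ⟨huA, hcu⟩ := hmem u huT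
    rw [hu, Finset.sum_singleton] at hsumT
    rw [hu, Finset.sum_singleton] at habsT
    have hb := abs_le.mp habsT
    obtain ⟨p, hp⟩ : ∃ p : ℤ, c u = p := ⟨_, rfl⟩
    rw [hp] at hsumT hcu hb
    obtain ⟨hb1, hb2⟩ := hb
    interval_cases p
    · exact (hA u huA u huA u huA).2.1 (by rw [← sub_eq_zero, ← neg_eq_zero.mpr hsumT]; abel1)
    · exact (hA u huA u huA u huA).2.2 (by rw [← neg_eq_zero.mpr hsumT]; abel1)
    · have hu0 : u = 0 := by
        have h := hsumT
        simp only [neg_smul, one_zsmul, neg_eq_zero] at h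
        exact h
      exact (hA u huA u huA u huA).2.2 (by rw [hu0, add_zero])
    · exact hcu rfl
    · have hu0 : u = 0 := by simpa using hsumT
      exact (hA u huA u huA u huA).2.2 (by rw [hu0, add_zero])
    · exact (hA u huA u huA u huA).2.2 (by rw [← hsumT]; abel1)
    · exact (hA u huA u huA u huA).2.1 (by rw [← sub_eq_zero, ← hsumT]; abel1)
  · -- card 2
    obtain ⟨u, v, huv, hT⟩ := Finset.card_eq_two.mp hc
    have huT : u ∈ T := by rw [hT]; simp
    have hvT : v ∈ T := by rw [hT]; simp
    obtain ⟨huA, hcu⟩ := hmem u huT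
    obtain ⟨hvA, hcv⟩ := hmem v hvT
    rw [hT, Finset.sum_pair huv] at hsumT habsT
    obtain ⟨p, hp⟩ : ∃ p : ℤ, c u = p := ⟨_, rfl⟩
    obtain ⟨q, hq⟩ : ∃ q : ℤ, c v = q := ⟨_, rfl⟩
    rw [hp] at hsumT hcu
    rw [hq] at hsumT hcv
    rw [hp, hq] at habsT
    have h1u := Int.one_le_abs hcu
    have h1v := Int.one_le_abs hcv
    have hap := abs_nonneg p
    have haq := abs_nonneg q
    have hp2 : -2 ≤ p ∧ p ≤ 2 := by
      constructor <;> [skip; skip] <;> cases abs_cases p with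
      | inl h => omega
      | inr h => omega
    have hq2 : -2 ≤ q ∧ q ≤ 2 := by
      constructor <;> [skip; skip] <;> cases abs_cases q with
      | inl h => omega
      | inr h => omega
    have hw3 : |p| + |q| ≤ 3 := habsT
    obtain ⟨hp2a, hp2b⟩ := hp2
    obtain ⟨hq2a, hq2b⟩ := hq2
    have hcase : (p ≠ 2 ∧ p ≠ -2) ∨ (q ≠ 2 ∧ q ≠ -2) := by
      rcases abs_cases p with ⟨h, h'⟩ | ⟨h, h'⟩ <;>
        rcases abs_cases q with ⟨h2, h2'⟩ | ⟨h2, h2'⟩ <;> omega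
    clear hw3 habsT h1u h1v hap haq
    interval_cases p <;> interval_cases q <;>
      first
        | (rcases hcase with ⟨hh, hh'⟩ | ⟨hh, hh'⟩ <;> first | exact hh rfl | exact hh' rfl)
        | (exact hcu rfl)
        | (exact hcv rfl)
        | (refine absurd ?_ (hA u huA v hvA u huA).2.2
            <;> (rw [← hsumT]; abel1))
        | (refine absurd ?_ (hA u huA v hvA u huA).2.2
            <;> (rw [← neg_eq_zero.mpr hsumT]; abel1))
        | (refine huv (sub_eq_zero.mp ?_); rw [← hsumT]; abel1)
        | (refine huv (sub_eq_zero.mp ?_); rw [← neg_eq_zero.mpr hsumT]; abel1)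
        | (refine absurd ?_ (hA v hvA v hvA u huA).2.1
            <;> (rw [← sub_eq_zero, ← hsumT]; abel1))
        | (refine absurd ?_ (hA v hvA v hvA u huA).2.1
            <;> (rw [← sub_eq_zero, ← neg_eq_zero.mpr hsumT]; abel1))
        | (refine absurd ?_ (hA v hvA v hvA u huA).1
            <;> (rw [← sub_eq_zero, ← hsumT]; abel1))
        | (refine absurd ?_ (hA v hvA v hvA u huA).1
            <;> (rw [← sub_eq_zero, ← neg_eq_zero.mpr hsumT]; abel1))
        | (refine absurd ?_ (hA u huA u huA v hvA).2.1
            <;> (rw [← sub_eq_zero, ← hsumT]; abel1))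
        | (refine absurd ?_ (hA u huA u huA v hvA).2.1
            <;> (rw [← sub_eq_zero, ← neg_eq_zero.mpr hsumT]; abel1))
        | (refine absurd ?_ (hA u huA u huA v hvA).1
            <;> (rw [← sub_eq_zero, ← hsumT]; abel1))
        | (refine absurd ?_ (hA u huA u huA v hvA).1
            <;> (rw [← sub_eq_zero, ← neg_eq_zero.mpr hsumT]; abel1))
  · -- card 3
    obtain ⟨u, v, w, huv, huw, hvw, hT⟩ := Finset.card_eq_three.mp hc
    have huT : u ∈ T := by rw [hT]; simp
    have hvT : v ∈ T := by rw [hT]; simp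
    have hwT : w ∈ T := by rw [hT]; simp
    obtain ⟨huA, hcu⟩ := hmem u huT
    obtain ⟨hvA, hcv⟩ := hmem v hvT
    obtain ⟨hwA, hcw⟩ := hmem w hwT
    have h3a : (∑ x ∈ ({u, v, w} : Finset G), |c x|) = |c u| + (|c v| + |c w|) := by
      rw [show ({u, v, w} : Finset G) = insert u (insert v {w}) from rfl,
        Finset.sum_insert (by simp [huv, huw]), Finset.sum_insert (by simp [hvw]),
        Finset.sum_singleton]
    have h3b : (∑ x ∈ ({u, v, w} : Finset G), c x • x) = c u • u + (c v • v + c w • w) := by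
      rw [show ({u, v, w} : Finset G) = insert u (insert v {w}) from rfl,
        Finset.sum_insert (by simp [huv, huw]), Finset.sum_insert (by simp [hvw]),
        Finset.sum_singleton]
    rw [hT, h3a] at habsT
    rw [hT, h3b] at hsumT
    obtain ⟨p, hp⟩ : ∃ p : ℤ, c u = p := ⟨_, rfl⟩
    obtain ⟨q, hq⟩ : ∃ q : ℤ, c v = q := ⟨_, rfl⟩
    obtain ⟨r, hr⟩ : ∃ r : ℤ, c w = r := ⟨_, rfl⟩
    rw [hp] at hsumT hcu
    rw [hq] at hsumT hcv
    rw [hr] at hsumT hcw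
    rw [hp, hq, hr] at habsT
    have h1u := Int.one_le_abs hcu
    have h1v := Int.one_le_abs hcv
    have h1w := Int.one_le_abs hcw
    have hpb : -1 ≤ p ∧ p ≤ 1 := by
      rcases abs_cases p with ⟨h, _⟩ | ⟨h, _⟩ <;>
      rcases abs_cases q with ⟨h', _⟩ | ⟨h', _⟩ <;>
      rcases abs_cases r with ⟨h'', _⟩ | ⟨h'', _⟩ <;> omega
    have hqb : -1 ≤ q ∧ q ≤ 1 := by
      rcases abs_cases p with ⟨h, _⟩ | ⟨h, _⟩ <;>
      rcases abs_cases q with ⟨h', _⟩ | ⟨h', _⟩ <;>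
      rcases abs_cases r with ⟨h'', _⟩ | ⟨h'', _⟩ <;> omega
    have hrb : -1 ≤ r ∧ r ≤ 1 := by
      rcases abs_cases p with ⟨h, _⟩ | ⟨h, _⟩ <;>
      rcases abs_cases q with ⟨h', _⟩ | ⟨h', _⟩ <;>
      rcases abs_cases r with ⟨h'', _⟩ | ⟨h'', _⟩ <;> omega
    obtain ⟨hpa, hpb⟩ := hpb
    obtain ⟨hqa, hqb⟩ := hqb
    obtain ⟨hra, hrb⟩ := hrb
    interval_cases p <;> interval_cases q <;> interval_cases r <;>
      first
        | (exact hcu rfl)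
        | (exact hcv rfl)
        | (exact hcw rfl)
        | (refine absurd ?_ (hA u huA v hvA w hwA).2.1
            <;> (rw [← sub_eq_zero, ← hsumT]; abel1))
        | (refine absurd ?_ (hA u huA v hvA w hwA).2.1
            <;> (rw [← sub_eq_zero, ← neg_eq_zero.mpr hsumT]; abel1))
        | (refine absurd ?_ (hA u huA v hvA w hwA).1
            <;> (rw [← sub_eq_zero, ← hsumT]; abel1))
        | (refine absurd ?_ (hA u huA v hvA w hwA).1
            <;> (rw [← sub_eq_zero, ← neg_eq_zero.mpr hsumT]; abel1))
        | (refine absurd ?_ (hA u huA w hwA v hvA).1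
            <;> (rw [← sub_eq_zero, ← hsumT]; abel1))
        | (refine absurd ?_ (hA u huA w hwA v hvA).1
            <;> (rw [← sub_eq_zero, ← neg_eq_zero.mpr hsumT]; abel1))
        | (refine absurd ?_ (hA v hvA w hwA u huA).1
            <;> (rw [← sub_eq_zero, ← hsumT]; abel1))
        | (refine absurd ?_ (hA v hvA w hwA u huA).1
            <;> (rw [← sub_eq_zero, ← neg_eq_zero.mpr hsumT]; abel1))

lemma good_card_le [Fintype G] {A : Finset G} (hG : Good A) :
    4 * A.card ≤ Fintype.card G := by
  classical
  rcases A.eq_empty_or_nonempty with rfl | ⟨a₀, ha₀⟩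
  · simp
  have hA1 : 1 ≤ A.card := Finset.card_pos.mpr ⟨a₀, ha₀⟩
  set B2 : Finset G := A.image (fun a => -a) with hB2
  set B3 : Finset G := A.image (fun a => a₀ + a) with hB3
  set B4 : Finset G := (A.erase a₀).image (fun a => a₀ + -a) with hB4
  have hc2 : B2.card = A.card := Finset.card_image_of_injective _ neg_injective
  have hc3 : B3.card = A.card := Finset.card_image_of_injective _ (add_right_injective a₀)
  have hinj4 : Function.Injective (fun a : G => a₀ + -a) := by
    intro x y h
    simpa using add_left_cancel h
  have hc4 : B4.card = A.card - 1 := by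
    rw [hB4, Finset.card_image_of_injective _ hinj4, Finset.card_erase_of_mem ha₀]
  -- zero not anywhere
  have hne0 : ∀ x ∈ A, x ≠ 0 := by
    intro x hx h0
    exact (hG x hx x hx x hx).2.2 (by rw [h0, add_zero])
  have h01 : (0 : G) ∉ A := fun h => hne0 0 h rfl
  have h02 : (0 : G) ∉ B2 := by
    rw [hB2]
    intro h
    obtain ⟨x, hx, hx0⟩ := Finset.mem_image.mp h
    exact hne0 x hx (by simpa using congrArg Neg.neg hx0)
  have h03 : (0 : G) ∉ B3 := by
    intro h
    obtain ⟨x, hx, hx0⟩ := Finset.mem_image.mp h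
    exact (hG a₀ ha₀ x hx x hx).2.2 hx0
  have h04 : (0 : G) ∉ B4 := by
    intro h
    obtain ⟨x, hx, hx0⟩ := Finset.mem_image.mp h
    have : a₀ = x := by
      have := congrArg (fun t => t + x) hx0
      simpa using this
    exact (Finset.ne_of_mem_erase hx) this.symm
  -- pairwise disjointness
  have d12 : Disjoint A B2 := by
    rw [Finset.disjoint_left]
    intro x hx hx2
    obtain ⟨y, hy, hyx⟩ := Finset.mem_image.mp hx2
    refine (hG y hy x hx x hx).2.2 ?_
    rw [← hyx]
    abel
  have d13 : Disjoint A B3 := by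
    rw [Finset.disjoint_left]
    intro x hx hx3
    obtain ⟨y, hy, hyx⟩ := Finset.mem_image.mp hx3
    exact (hG a₀ ha₀ y hy x hx).1 hyx
  have d14 : Disjoint A B4 := by
    rw [Finset.disjoint_left]
    intro x hx hx4
    obtain ⟨y, hy, hyx⟩ := Finset.mem_image.mp hx4
    refine (hG x hx y (Finset.mem_of_mem_erase hy) a₀ ha₀).1 ?_
    rw [← hyx]
    abel
  have d23 : Disjoint B2 B3 := by
    rw [Finset.disjoint_left]
    intro x hx2 hx3
    obtain ⟨y, hy, hyx⟩ := Finset.mem_image.mp hx2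
    obtain ⟨z, hz, hzx⟩ := Finset.mem_image.mp hx3
    refine (hG a₀ ha₀ z hz y hy).2.1 ?_
    rw [hzx, ← hyx]
  have d24 : Disjoint B2 B4 := by
    rw [Finset.disjoint_left]
    intro x hx2 hx4
    obtain ⟨y, hy, hyx⟩ := Finset.mem_image.mp hx2
    obtain ⟨z, hz, hzx⟩ := Finset.mem_image.mp hx4
    refine (hG a₀ ha₀ y hy z (Finset.mem_of_mem_erase hz)).1 ?_
    have : a₀ + -z = -y := by rw [hzx, ← hyx]
    have := congrArg (fun t => t + z + y) this
    simpa [add_assoc, add_comm, add_left_comm] using this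
  have d34 : Disjoint B3 B4 := by
    rw [Finset.disjoint_left]
    intro x hx3 hx4
    obtain ⟨y, hy, hyx⟩ := Finset.mem_image.mp hx3
    obtain ⟨z, hz, hzx⟩ := Finset.mem_image.mp hx4
    refine (hG y hy z (Finset.mem_of_mem_erase hz) y hy).2.2 ?_
    have : a₀ + y = a₀ + -z := by rw [hyx, hzx]
    have h2 := add_left_cancel this
    rw [h2]
    abel
  -- assemble
  set U : Finset G := A ∪ B2 ∪ B3 ∪ B4 with hU
  have hcU : U.card = A.card + A.card + A.card + (A.card - 1) := by
    rw [hU, Finset.card_union_of_disjoint, Finset.card_union_of_disjoint,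
      Finset.card_union_of_disjoint d12, hc2, hc3, hc4]
    · exact Finset.disjoint_union_left.mpr ⟨d13, d23⟩
    · exact Finset.disjoint_union_left.mpr ⟨Finset.disjoint_union_left.mpr ⟨d14, d24⟩, d34⟩
  have h0U : (0 : G) ∉ U := by
    rw [hU]
    simp only [Finset.mem_union, not_or]
    exact ⟨⟨⟨h01, h02⟩, h03⟩, h04⟩
  have hcard : (insert (0 : G) U).card = 1 + U.card := by
    rw [Finset.card_insert_of_notMem h0U]
    ring
  have hle : (insert (0 : G) U).card ≤ Fintype.card G := by
    rw [← Finset.card_univ]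
    exact Finset.card_le_univ _
  omega

lemma nat_not_dvd_between {k v : ℕ} (h1 : k < v) (h2 : v < 2 * k) : ¬ k ∣ v := by
  rintro ⟨t, rfl⟩
  rcases t with _ | _ | t
  · omega
  · omega
  · have : k * 2 ≤ k * (t + 1 + 1) := Nat.mul_le_mul_left k (by omega)
    omega

lemma exists_goodS (k : ℕ) (hk : 4 ≤ k) :
    ∃ S : Finset (ZMod k), Good S ∧ k ≤ 9 * S.card := by
  haveI : NeZero k := ⟨by omega⟩
  by_cases h4 : k = 4
  · subst h4; exact ⟨{1}, by unfold Good; decide, by decide⟩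
  by_cases h6 : k = 6
  · subst h6; exact ⟨{1}, by unfold Good; decide, by decide⟩
  by_cases h10 : k = 10
  · subst h10; exact ⟨{7, 9}, by unfold Good; decide, by decide⟩
  by_cases h12 : k = 12
  · subst h12; exact ⟨{7, 9}, by unfold Good; decide, by decide⟩
  have key : 3 * (k / 2 + (k + 8) / 9) < 2 * k := by omega
  refine ⟨(Finset.Ico (k / 2 + 1) (k / 2 + 1 + (k + 8) / 9)).image (fun a : ℕ => (a : ZMod k)),
    ?_, ?_⟩
  · -- Good
    intro x hx y hy z hz
    obtain ⟨a, ha, rfl⟩ := Finset.mem_image.mp hx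
    obtain ⟨b, hb, rfl⟩ := Finset.mem_image.mp hy
    obtain ⟨c, hc, rfl⟩ := Finset.mem_image.mp hz
    rw [Finset.mem_Ico] at ha hb hc
    have hba : k + 1 ≤ 2 * a ∧ 3 * a < 2 * k := by omega
    have hbb : k + 1 ≤ 2 * b ∧ 3 * b < 2 * k := by omega
    have hbc : k + 1 ≤ 2 * c ∧ 3 * c < 2 * k := by omega
    refine ⟨?_, ?_, ?_⟩
    · intro heq
      have h1 : ((a + b : ℕ) : ZMod k) = ((c : ℕ) : ZMod k) := by push_cast; exact heq
      have h2 : (k : ℕ) ∣ (a + b) - c :=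
        (Nat.modEq_iff_dvd' (by omega)).mp ((ZMod.natCast_eq_natCast_iff _ _ _).mp h1).symm
      have h3 : a + b - c ≠ 0 := by omega
      have := Nat.le_of_dvd (by omega) h2
      omega
    · intro heq
      have h1 : ((a + b + c : ℕ) : ZMod k) = 0 := by
        push_cast
        rw [heq]
        exact neg_add_cancel _
      have h2 : k ∣ a + b + c := (ZMod.natCast_eq_zero_iff _ _).mp h1
      exact nat_not_dvd_between (by omega) (by omega) h2
    · intro heq
      have h1 : ((a + b : ℕ) : ZMod k) = 0 := by push_cast; exact heq
      have h2 : k ∣ a + b := (ZMod.natCast_eq_zero_iff _ _).mp h1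
      exact nat_not_dvd_between (by omega) (by omega) h2
  · -- card
    rw [Finset.card_image_of_injOn, Nat.card_Ico]
    · omega
    · intro a ha b hb hab
      simp only [Finset.coe_Ico, Set.mem_Ico] at ha hb
      have h1 : (a : ZMod k).val = a := ZMod.val_cast_of_lt (by omega)
      have h2 : (b : ZMod k).val = b := ZMod.val_cast_of_lt (by omega)
      simp only at hab
      rw [← h1, ← h2, hab]

lemma good_pullback [Fintype G] {H : Type*} [AddCommGroup H] [Fintype H] [DecidableEq H]
    (φ : G →+ H) (hφ : Function.Surjective φ) {S : Finset H} (hS : Good S)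
    (hBound : Fintype.card H ≤ 9 * S.card) :
    ∃ A : Finset G, Good A ∧ Fintype.card G ≤ 9 * A.card := by
  classical
  set A : Finset G := Finset.univ.filter (fun x : G => φ x ∈ S) with hA
  have hmem : ∀ x ∈ A, φ x ∈ S := fun x hx => (Finset.mem_filter.mp hx).2
  refine ⟨A, ?_, ?_⟩
  · intro x hx y hy z hz
    obtain ⟨c1, c2, c3⟩ := hS (φ x) (hmem x hx) (φ y) (hmem y hy) (φ z) (hmem z hz)
    exact ⟨fun h => c1 (by rw [← map_add, h]),
      fun h => c2 (by rw [← map_add, h, map_neg]),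
      fun h => c3 (by rw [← map_add, h, map_zero])⟩
  · set K := (Finset.univ.filter (fun x : G => φ x = 0)).card with hK
    have hfib : ∀ s : H, (Finset.univ.filter (fun x : G => φ x = s)).card = K := by
      intro s
      obtain ⟨g, rfl⟩ := hφ s
      refine Finset.card_bij' (fun x _ => x - g) (fun y _ => y + g) ?_ ?_ ?_ ?_
      · intro a ha
        simp only [Finset.mem_filter, Finset.mem_univ, true_and] at ha ⊢
        rw [map_sub, ha, sub_self]
      · intro a ha
        simp only [Finset.mem_filter, Finset.mem_univ, true_and] at ha ⊢
        rw [map_add, ha, zero_add]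
      · intro a _; simp
      · intro a _; simp
    have hAcard : A.card = S.card * K := by
      rw [Finset.card_eq_sum_card_fiberwise (f := φ) (t := S) hmem]
      have : ∀ s ∈ S, (A.filter (fun x => φ x = s)).card
          = (Finset.univ.filter (fun x : G => φ x = s)).card := by
        intro s hs
        congr 1
        ext x
        simp only [hA, Finset.mem_filter, Finset.mem_univ, true_and]
        constructor
        · rintro ⟨_, h⟩; exact h
        · intro h; exact ⟨h ▸ hs, h⟩
      rw [Finset.sum_congr rfl this, Finset.sum_congr rfl (fun s _ => hfib s),
        Finset.sum_const, smul_eq_mul]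
    have hGcard : Fintype.card G = Fintype.card H * K := by
      have := Finset.card_eq_sum_card_fiberwise
        (f := φ) (s := (Finset.univ : Finset G)) (t := (Finset.univ : Finset H))
        (fun x _ => Finset.mem_univ _)
      rw [Finset.card_univ] at this
      rw [this, Finset.sum_congr rfl (fun s _ => hfib s), Finset.sum_const, smul_eq_mul,
        Finset.card_univ]
    rw [hGcard, hAcard, ← mul_assoc]
    exact Nat.mul_le_mul_right K hBound

lemma exists_good_subset [Fintype G] (h2 : ¬ ∀ x : G, 2 • x = 0) (h3 : ¬ ∀ x : G, 3 • x = 0) :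
    ∃ A : Finset G, Good A ∧ Fintype.card G ≤ 9 * A.card := by
  classical
  obtain ⟨ι, hι, n, hn1, ⟨e⟩⟩ := AddCommGroup.equiv_directSum_zmod_of_finite' G
  haveI := hι
  let π : ∀ i, (⨁ j, ZMod (n j)) →+ ZMod (n i) := fun i =>
    AddMonoidHom.mk' (fun f => f i) (fun f g => DirectSum.add_apply f g i)
  have hπsurj : ∀ i, Function.Surjective ((π i).comp e.toAddMonoidHom) := by
    intro i a
    refine ⟨e.symm (DirectSum.of (fun j => ZMod (n j)) i a), ?_⟩
    simp only [AddMonoidHom.comp_apply, AddEquiv.coe_toAddMonoidHom, AddEquiv.apply_symm_apply]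
    exact DirectSum.of_eq_same (β := fun j => ZMod (n j)) i a
  by_cases hbig : ∃ i, 4 ≤ n i
  · obtain ⟨i, hi⟩ := hbig
    haveI : NeZero (n i) := ⟨by omega⟩
    obtain ⟨S, hS, hb⟩ := exists_goodS (n i) hi
    refine good_pullback ((π i).comp e.toAddMonoidHom) (hπsurj i) hS ?_
    rwa [ZMod.card]
  · push_neg at hbig
    have hsmall : ∀ i, n i = 2 ∨ n i = 3 := by
      intro i
      have := hn1 i
      have := hbig i
      omega
    have key2 : ∀ (m : ℕ), m = 2 → ∀ z : ZMod m, 2 • z = 0 := by rintro m rfl; decide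
    have key3 : ∀ (m : ℕ), m = 3 → ∀ z : ZMod m, 3 • z = 0 := by rintro m rfl; decide
    have hi3 : ∃ i, n i = 3 := by
      by_contra hno
      push_neg at hno
      refine h2 (fun x => e.injective ?_)
      rw [map_nsmul, map_zero, two_nsmul]
      refine DFunLike.ext _ _ (fun i => ?_)
      rw [DirectSum.add_apply, DirectSum.zero_apply]
      have h2' : n i = 2 := by
        rcases hsmall i with h | h
        · exact h
        · exact absurd h (hno i)
      have := key2 _ h2' ((e x) i)
      rwa [two_nsmul] at this
    have hj2 : ∃ j, n j = 2 := by
      by_contra hno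
      push_neg at hno
      refine h3 (fun x => e.injective ?_)
      rw [map_nsmul, map_zero, show (3 : ℕ) = 2 + 1 from rfl, add_nsmul, two_nsmul, one_nsmul]
      refine DFunLike.ext _ _ (fun i => ?_)
      rw [DirectSum.add_apply, DirectSum.add_apply, DirectSum.zero_apply]
      have h3' : n i = 3 := by
        rcases hsmall i with h | h
        · exact absurd h (hno i)
        · exact h
      have := key3 _ h3' ((e x) i)
      rwa [show (3 : ℕ) = 2 + 1 from rfl, add_nsmul, two_nsmul, one_nsmul] at this
    obtain ⟨i, hi⟩ := hi3
    obtain ⟨j, hj⟩ := hj2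
    have hij : i ≠ j := fun h => by rw [h, hj] at hi; omega
    haveI : NeZero (n i) := ⟨by omega⟩
    haveI : NeZero (n j) := ⟨by omega⟩
    set φ : G →+ ZMod (n i) × ZMod (n j) := ((π i).prod (π j)).comp e.toAddMonoidHom with hφdef
    have hφsurj : Function.Surjective φ := by
      rintro ⟨a, b⟩
      refine ⟨e.symm (DirectSum.of (fun j => ZMod (n j)) i a + DirectSum.of (fun j => ZMod (n j)) j b), ?_⟩
      simp only [hφdef, AddMonoidHom.comp_apply, AddEquiv.coe_toAddMonoidHom,
        AddEquiv.apply_symm_apply, AddMonoidHom.prod_apply]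
      have e1 : (π i) (DirectSum.of (fun j => ZMod (n j)) i a + DirectSum.of (fun j => ZMod (n j)) j b) = a := by
        show (DirectSum.of (fun j => ZMod (n j)) i a + DirectSum.of (fun j => ZMod (n j)) j b) i = a
        rw [DirectSum.add_apply, DirectSum.of_eq_same, DirectSum.of_eq_of_ne _ _ _ hij]
        exact add_zero a
      have e2 : (π j) (DirectSum.of (fun j => ZMod (n j)) i a + DirectSum.of (fun j => ZMod (n j)) j b) = b := by
        show (DirectSum.of (fun j => ZMod (n j)) i a + DirectSum.of (fun j => ZMod (n j)) j b) j = b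
        rw [DirectSum.add_apply, DirectSum.of_eq_same, DirectSum.of_eq_of_ne _ _ _ (Ne.symm hij)]
        exact zero_add b
      rw [e1, e2]
    have keyi : (1 : ZMod (n i)) + 1 ≠ 1 ∧ (1 : ZMod (n i)) + 1 ≠ 0 := by
      have : ∀ (m : ℕ), m = 3 → ((1 : ZMod m) + 1 ≠ 1 ∧ (1 : ZMod m) + 1 ≠ 0) := by
        rintro m rfl; decide
      exact this _ hi
    have keyj : (1 : ZMod (n j)) + 1 ≠ -1 := by
      have : ∀ (m : ℕ), m = 2 → (1 : ZMod m) + 1 ≠ -1 := by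
        rintro m rfl; decide
      exact this _ hj
    set S : Finset (ZMod (n i) × ZMod (n j)) := {(1, 1)} with hSdef
    have hS : Good S := by
      intro x hx y hy z hz
      rw [hSdef, Finset.mem_singleton] at hx hy hz
      subst hx; subst hy; subst hz
      refine ⟨fun h => keyi.1 ?_, fun h => keyj ?_, fun h => keyi.2 ?_⟩
      · exact congrArg Prod.fst h
      · exact congrArg Prod.snd h
      · exact congrArg Prod.fst h
    refine good_pullback φ hφsurj hS ?_
    have h6 : n i * n j = 6 := by rw [hi, hj]
    rw [Fintype.card_prod, ZMod.card, ZMod.card, h6, hSdef, Finset.card_singleton]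
    norm_num

lemma empty_isTIndep : IsTIndep 3 (∅ : Finset G) :=
  fun c h _ _ x => h x (Finset.notMem_empty x)

end Pieces

theorem stmt6 {G : Type*} [AddCommGroup G] [Fintype G]
    (hn : 2 ≤ Fintype.card G) :
    (((∀ x : G, 2 • x = 0) ∨ (∀ x : G, 3 • x = 0)) → sIndep G 3 = 0) ∧
    (¬ ((∀ x : G, 2 • x = 0) ∨ (∀ x : G, 3 • x = 0)) →
      (Fintype.card G : ℚ) / 9 ≤ (sIndep G 3 : ℚ) ∧
      (sIndep G 3 : ℚ) ≤ (Fintype.card G : ℚ) / 4) := by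
  constructor
  · intro h
    have hempty : ∀ A : Finset G, IsTIndep 3 A → A = ∅ := by
      intro A hA
      by_contra hne
      obtain ⟨a, ha⟩ := Finset.nonempty_of_ne_empty hne
      have hG := isTIndep_good hA
      rcases h with h2 | h3
      · refine (hG a ha a ha a ha).2.2 ?_
        have := h2 a
        rwa [two_nsmul] at this
      · refine (hG a ha a ha a ha).2.1 ?_
        have := h3 a
        rw [show (3 : ℕ) = 2 + 1 from rfl, add_nsmul, two_nsmul, one_nsmul] at this
        exact eq_neg_of_add_eq_zero_left this
    have hset : {m | ∃ A : Finset G, IsTIndep 3 A ∧ A.card = m} = {0} := by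
      ext m
      constructor
      · rintro ⟨A, hA, rfl⟩
        rw [hempty A hA]
        simp
      · rintro rfl
        exact ⟨∅, empty_isTIndep, rfl⟩
    rw [sIndep, hset]
    exact csSup_singleton 0
  · intro h
    rw [not_or] at h
    obtain ⟨h2, h3⟩ := h
    obtain ⟨A, hGood, hcard⟩ := exists_good_subset h2 h3
    have hA : IsTIndep 3 A := good_isTIndep hGood
    have hbdd : BddAbove {m | ∃ A : Finset G, IsTIndep 3 A ∧ A.card = m} := by
      refine ⟨Fintype.card G, ?_⟩
      rintro m ⟨B, _, rfl⟩
      exact (Finset.card_le_univ B).trans (le_of_eq Finset.card_univ)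
    have h1 : A.card ≤ sIndep G 3 := le_csSup hbdd ⟨A, hA, rfl⟩
    have hmem : sIndep G 3 ∈ {m | ∃ A : Finset G, IsTIndep 3 A ∧ A.card = m} :=
      Nat.sSup_mem ⟨0, ∅, empty_isTIndep, rfl⟩ hbdd
    obtain ⟨B, hB, hBcard⟩ := hmem
    have h4 : 4 * sIndep G 3 ≤ Fintype.card G := by
      rw [← hBcard]
      exact good_card_le (isTIndep_good hB)
    constructor
    · rw [div_le_iff₀ (by norm_num : (0:ℚ) < 9)]
      have : Fintype.card G ≤ sIndep G 3 * 9 := by omega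
      exact_mod_cast this
    · rw [le_div_iff₀ (by norm_num : (0:ℚ) < 4)]
      have : sIndep G 3 * 4 ≤ Fintype.card G := by omega
      exact_mod_cast this
end

section
/- Let G be a finite abelian group of order n ≥ 2 whose exponent κ is congruent to 2 modulo 4. Then every 3-independent subset A of G satisfies |A| ≤ (n - |Ord(G,2)|)/4, where Ord(G,2) = {x ∈ G : 2x = 0}. -/
section Aux
variable {G : Type*} [AddCommGroup G]

private lemma sum_indic [DecidableEq G] (A : Finset G) {a : G} (ha : a ∈ A) (α : ℤ) :
    (∑ x ∈ A, (if x = a then α else 0) • x) = α • a := by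
  rw [Finset.sum_eq_single a]
  · simp
  · intro b _ hb; simp [hb]
  · intro h; exact absurd ha h

lemma indep_rel3 [DecidableEq G] {A : Finset G} (hA : IsTIndep 3 A) {a b c : G}
    (ha : a ∈ A) (hb : b ∈ A) (hc : c ∈ A)
    (α β γ : ℤ) (h3 : |α| + |β| + |γ| ≤ 3)
    (hrel : α • a + β • b + γ • c = 0) :
    ∀ x, ((if x = a then α else 0) + (if x = b then β else 0)
          + (if x = c then γ else 0)) = 0 := by
  apply hA
  · intro x hx
    have hxa : x ≠ a := fun h => hx (h ▸ ha)
    have hxb : x ≠ b := fun h => hx (h ▸ hb)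
    have hxc : x ≠ c := fun h => hx (h ▸ hc)
    simp [hxa, hxb, hxc]
  · calc (∑ x ∈ A, |(if x = a then α else 0) + (if x = b then β else 0)
          + (if x = c then γ else 0)|)
        ≤ ∑ x ∈ A, (|if x = a then α else 0| + |if x = b then β else 0|
          + |if x = c then γ else 0|) := by
          refine Finset.sum_le_sum fun x _ => ?_
          exact le_trans (abs_add_le _ _) (by gcongr; exact abs_add_le _ _)
      _ = (∑ x ∈ A, |if x = a then α else 0|) + (∑ x ∈ A, |if x = b then β else 0|)
          + (∑ x ∈ A, |if x = c then γ else 0|) := by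
          rw [Finset.sum_add_distrib, Finset.sum_add_distrib]
      _ = |α| + |β| + |γ| := by
          have key : ∀ d ∈ A, ∀ μ : ℤ, (∑ x ∈ A, |if x = d then μ else 0|) = |μ| := by
            intro d hd μ
            simp [apply_ite abs, Finset.sum_ite_eq', hd]
          rw [key a ha α, key b hb β, key c hc γ]
      _ ≤ 3 := h3
  · have : ∀ x ∈ A, ((if x = a then α else 0) + (if x = b then β else 0)
          + (if x = c then γ else 0)) • x
        = (if x = a then α else 0) • x + (if x = b then β else 0) • x
          + (if x = c then γ else 0) • x := fun x _ => by rw [add_smul, add_smul]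
    rw [Finset.sum_congr rfl this, Finset.sum_add_distrib, Finset.sum_add_distrib,
      sum_indic A ha, sum_indic A hb, sum_indic A hc, hrel]

lemma neg_self_of (e : G) (h : e + e = 0) : -e = e := neg_eq_of_add_eq_zero_left h

lemma sign_smul {s : ℤ} (hs : s = 1 ∨ s = -1) (e : G) (h : e + e = 0) : s • e = e := by
  rcases hs with h1 | h1 <;> subst h1 <;> simp [neg_self_of e h]

lemma comb2 {σ δ : ℤ} (hσ : σ = 1 ∨ σ = -1) (hδ : δ = 1 ∨ δ = -1)
    (e y : G) (he : e + e = 0) :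
    (2:ℤ) • (e + σ • y) + (-(σ*δ)) • (δ • (y+y)) = 0 := by
  rcases hσ with h1 | h1 <;> rcases hδ with h2 | h2 <;> subst h1 <;> subst h2 <;>
    simp [two_zsmul, neg_self_of e he] <;> abel_nf <;>
    first
      | rfl
      | (rw [show ((2:ℕ) • e : G) = 0 by rw [two_nsmul, he]])
      | (rw [show ((2:ℤ) • e : G) = 0 by rw [two_zsmul, he]])

lemma comb3 {σ σ' δ : ℤ} (hσ : σ = 1 ∨ σ = -1) (hσ' : σ' = 1 ∨ σ' = -1)
    (hδ : δ = 1 ∨ δ = -1) (e e' f y : G) (he : e + e = 0) (he' : e' + e' = 0)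
    (hf : f = e' + e) :
    σ • (e + σ • y) + σ' • (e' + σ' • y) + (-δ) • (f + δ • (y+y)) = 0 := by
  subst hf
  have hff : (e' + e) + (e' + e) = 0 := by
    rw [add_add_add_comm, he, he']; simp
  rcases hσ with h1 | h1 <;> rcases hσ' with h2 | h2 <;> rcases hδ with h3 | h3 <;>
    subst h1 <;> subst h2 <;> subst h3 <;>
    simp [neg_self_of e he, neg_self_of e' he', neg_self_of _ hff, neg_add_rev] <;>
    abel_nf <;>
    first
      | (rw [show ((2:ℕ) • e + (2:ℕ) • e' : G) = 0 by rw [two_nsmul, two_nsmul, he, he']; simp])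
      | (rw [show ((2:ℤ) • e + (2:ℤ) • e' : G) = 0 by rw [two_zsmul, two_zsmul, he, he']; simp])

lemma nsmul_odd_fix (m j : ℕ) (hmj : m = 2*j+1) (v : G) (h2 : v + v = 0) :
    m • v = v := by
  subst hmj
  rw [add_nsmul, one_nsmul, mul_nsmul, two_nsmul, h2, smul_zero, zero_add]

lemma killed (m j : ℕ) (hmj : m = 2*j+1) (v : G) (h2 : v + v = 0) (hm : m • v = 0) :
    v = 0 := by
  rw [nsmul_odd_fix m j hmj v h2] at hm; exact hm

lemma no_pair [DecidableEq G] {A : Finset G} (hA : IsTIndep 3 A) {a b : G}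
    (ha : a ∈ A) (hb : b ∈ A) : a + b ≠ 0 := by
  intro h
  have := indep_rel3 hA ha hb hb 1 1 0 (by norm_num) (by simpa using h) a
  by_cases hab : a = b <;> simp [hab] at this

lemma pair_sum (e e' w : G) : (e + (1:ℤ)•w) + (e' + (-1:ℤ)•w) = e + e' := by
  simp; abel

/-- Key step: for nonzero `y` in the odd component, the number of elements of `A`
whose odd part is `±y` plus the number with odd part `±2y` is at most `|Ord(G,2)|`. -/
lemma stepC [DecidableEq G] {A : Finset G} (hA : IsTIndep 3 A)
    (m j : ℕ) (hmj : m = 2*j+1) (hexp : ∀ x : G, (2*m) • x = 0)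
    (Eset : Finset G) (hE : ∀ x, x ∈ Eset ↔ x + x = 0)
    (y : G) (hy : m • y = 0) (hy0 : y ≠ 0) :
    (A.filter (fun a => (m+1) • a = y ∨ (m+1) • a = -y)).card
      + (A.filter (fun a => (m+1) • a = (y + y) ∨ (m+1) • a = -(y + y))).card
      ≤ Eset.card := by
  set π : G → G := fun a => (m+1) • a with hπ
  set ε : G → G := fun a => m • a with hε
  have hεπ : ∀ x : G, ε x + π x = x := by
    intro x
    have : m • x + (m+1) • x = (2*m+1) • x := by
      rw [← add_nsmul]; ring_nf
    rw [hε, hπ]; dsimp only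
    rw [this, add_nsmul, hexp, zero_add, one_nsmul]
  have hε2 : ∀ x : G, ε x + ε x = 0 := by
    intro x
    rw [hε]; dsimp only
    rw [← two_nsmul, ← mul_nsmul', hexp]
  -- decomposition of members of the filtered sets
  have hdec : ∀ (w : G) (a : G), a ∈ A.filter (fun a => π a = w ∨ π a = -w) →
      ∃ s : ℤ, (s = 1 ∨ s = -1) ∧ a = ε a + s • w := by
    intro w a haf
    rcases Finset.mem_filter.1 haf with ⟨_, h | h⟩
    · exact ⟨1, Or.inl rfl, by rw [one_zsmul, ← h, hεπ]⟩
    · exact ⟨-1, Or.inr rfl, by rw [neg_zsmul, one_zsmul, ← h, hεπ]⟩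
  have hεE : ∀ x : G, ε x ∈ Eset := fun x => (hE _).2 (hε2 x)
  have hy2 : m • (y + y) = 0 := by rw [smul_add, hy, add_zero]
  -- injectivity of ε on each filtered set
  have hinj : ∀ w : G, ∀ a ∈ A.filter (fun a => π a = w ∨ π a = -w),
      ∀ a' ∈ A.filter (fun a => π a = w ∨ π a = -w), ε a = ε a' → a = a' := by
    intro w a haf a' haf' hee
    obtain ⟨s, hs, hda⟩ := hdec w a haf
    obtain ⟨s', hs', hda'⟩ := hdec w a' haf'
    have haA : a ∈ A := (Finset.mem_filter.1 haf).1
    have haA' : a' ∈ A := (Finset.mem_filter.1 haf').1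
    rcases hs with h1 | h1 <;> rcases hs' with h2 | h2 <;> subst h1 <;> subst h2
    · rw [hda, hda', hee]
    · exfalso
      apply no_pair hA haA haA'
      rw [hda, hda', pair_sum, hee, hε2]
    · exfalso
      apply no_pair hA haA' haA
      rw [hda, hda', pair_sum, hee, hε2]
    · rw [hda, hda', hee]
  set Sfin := A.filter (fun a => π a = y ∨ π a = -y) with hSfin
  set Tfin := A.filter (fun a => π a = (y+y) ∨ π a = -(y+y)) with hTfin
  set S := Sfin.image ε with hS
  set T := Tfin.image ε with hT
  have hScard : S.card = Sfin.card :=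
    Finset.card_image_of_injOn (fun a ha a' ha' => hinj y a ha a' ha')
  have hTcard : T.card = Tfin.card :=
    Finset.card_image_of_injOn (fun a ha a' ha' => hinj (y+y) a ha a' ha')
  have hSE : S ⊆ Eset := by
    intro x hx
    obtain ⟨a, _, rfl⟩ := Finset.mem_image.1 hx
    exact hεE a
  have hTE : T ⊆ Eset := by
    intro x hx
    obtain ⟨a, _, rfl⟩ := Finset.mem_image.1 hx
    exact hεE a
  rcases Finset.eq_empty_or_nonempty Sfin with hSe | ⟨a₀, ha₀⟩
  · rw [hSe]
    simp only [Finset.card_empty, zero_add]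
    exact le_trans (le_of_eq hTcard.symm) (Finset.card_le_card hTE)
  · obtain ⟨σ, hσ, hda₀⟩ := hdec y a₀ ha₀
    have ha₀A : a₀ ∈ A := (Finset.mem_filter.1 ha₀).1
    set s0 : G := ε a₀ with hs0
    have hs0S : s0 ∈ S := Finset.mem_image_of_mem ε ha₀
    set U : Finset G := insert 0 ((S.erase s0).image (fun x => x + s0)) with hU
    have hUE : U ⊆ Eset := by
      intro x hx
      rcases Finset.mem_insert.1 hx with rfl | hx
      · exact (hE _).2 (by simp)
      · obtain ⟨z, hz, rfl⟩ := Finset.mem_image.1 hx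
        have h1 : z + z = 0 := (hE _).1 (hSE (Finset.mem_of_mem_erase hz))
        have h2 : s0 + s0 = 0 := hε2 a₀
        exact (hE _).2 (by rw [add_add_add_comm, h1, h2, add_zero])
    have hUcard : U.card = S.card := by
      rw [hU, Finset.card_insert_of_notMem, Finset.card_image_of_injective _
        (add_left_injective s0), Finset.card_erase_of_mem hs0S]
      · have : 0 < S.card := Finset.card_pos.2 ⟨s0, hs0S⟩
        omega
      · intro h0
        obtain ⟨z, hz, hz0⟩ := Finset.mem_image.1 h0
        have h1 : z + z = 0 := (hE _).1 (hSE (Finset.mem_of_mem_erase hz))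
        have h2 : s0 + s0 = 0 := hε2 a₀
        have : z = s0 := by
          have h3 := eq_neg_of_add_eq_zero_left hz0
          rw [neg_self_of _ h2] at h3; exact h3
        exact (Finset.mem_erase.1 hz).1 this
    -- T is disjoint from U
    have hdisj : Disjoint T U := by
      rw [Finset.disjoint_left]
      intro t htT htU
      obtain ⟨b, hbT, hbt⟩ := Finset.mem_image.1 htT
      obtain ⟨δ, hδ, hdb⟩ := hdec (y+y) b hbT
      have hbA : b ∈ A := (Finset.mem_filter.1 hbT).1
      have hσδ : σ*δ = 1 ∨ σ*δ = -1 := by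
        rcases hσ with h1 | h1 <;> rcases hδ with h2 | h2 <;> subst h1 <;> subst h2 <;>
          norm_num
      rcases Finset.mem_insert.1 htU with rfl | htU
      · -- t = 0 : contradiction via 2•a₀ - (σδ)•b = 0
        have hb' : b = δ • (y + y) := by rw [hdb, hbt, zero_add]
        have hrel : (2:ℤ) • a₀ + (-(σ*δ)) • b + (0:ℤ) • b = 0 := by
          rw [zero_smul, add_zero, hda₀, hb']
          exact comb2 hσ hδ s0 y (hε2 a₀)
        have h3 : |(2:ℤ)| + |(-(σ*δ))| + |(0:ℤ)| ≤ 3 := by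
          rcases hσδ with h | h <;> rw [h] <;> norm_num
        have := indep_rel3 hA ha₀A hbA hbA 2 (-(σ*δ)) 0 h3 hrel a₀
        by_cases hab : a₀ = b
        · simp [hab] at this
          rcases hσδ with h | h <;> rw [h] at this <;> omega
        · simp [hab] at this
      · -- t = z + s0 with z ∈ S.erase s0
        obtain ⟨z, hz, hzt⟩ := Finset.mem_image.1 htU
        have hzS := Finset.mem_of_mem_erase hz
        obtain ⟨a', ha', hea'⟩ := Finset.mem_image.1 hzS
        have ha'A : a' ∈ A := (Finset.mem_filter.1 ha').1
        obtain ⟨σ', hσ', hda'⟩ := hdec y a' ha'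
        have ha₀a' : a₀ ≠ a' := by
          intro h
          apply (Finset.mem_erase.1 hz).1
          rw [← hea', ← h]
        have hf : ε b = ε a' + ε a₀ := by rw [hea', hbt, ← hzt]
        have hrel : σ • a₀ + σ' • a' + (-δ) • b = 0 := by
          rw [hda₀, hda', hdb]
          exact comb3 hσ hσ' hδ s0 (ε a') (ε b) y (hε2 a₀) (hε2 a') hf
        have h3 : |σ| + |σ'| + |(-δ)| ≤ 3 := by
          rcases hσ with h1 | h1 <;> rcases hσ' with h2 | h2 <;>
            rcases hδ with h3 | h3 <;> subst h1 <;> subst h2 <;> subst h3 <;> norm_num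
        have hall := indep_rel3 hA ha₀A ha'A hbA σ σ' (-δ) h3 hrel
        by_cases hab : a₀ = b
        · have := hall a'
          have ha'b : a' ≠ b := fun h => ha₀a' (hab.trans h.symm)
          simp [ha₀a'.symm, ha'b, Ne.symm ha₀a'] at this
          rcases hσ' with h | h <;> rw [h] at this <;> omega
        · have := hall a₀
          simp [ha₀a', hab] at this
          rcases hσ with h | h <;> rw [h] at this <;> omega
    -- conclude
    have hTle : T.card ≤ Eset.card - U.card := by
      have : T ⊆ Eset \ U := Finset.subset_sdiff.2 ⟨hTE, hdisj⟩
      calc T.card ≤ (Eset \ U).card := Finset.card_le_card this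
        _ = Eset.card - U.card := Finset.card_sdiff_of_subset hUE
    have hSle : S.card ≤ Eset.card := Finset.card_le_card hSE
    have hU' : U.card ≤ Eset.card := Finset.card_le_card hUE
    omega

end Aux

theorem stmt9 {G : Type*} [AddCommGroup G] [Fintype G]
    (hn : 2 ≤ Fintype.card G)
    (hκ : AddMonoid.exponent G % 4 = 2) :
    ∀ A : Finset G, IsTIndep 3 A →
      (A.card : ℚ) ≤
        ((Fintype.card G : ℚ) - (Nat.card {x : G // 2 • x = 0} : ℚ)) / 4 := by
  classical
  intro A hA
  set k := AddMonoid.exponent G with hk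
  set j : ℕ := k / 4 with hj
  set m : ℕ := 2 * j + 1 with hm
  have hk4 : k = 4 * j + 2 := by omega
  have hk2m : k = 2 * m := by omega
  have hexp : ∀ x : G, (2 * m) • x = 0 := by
    intro x
    rw [← hk2m, hk]
    exact AddMonoid.exponent_nsmul_eq_zero x
  set π : G → G := fun a => (m+1) • a with hπ
  set Eset : Finset G := Finset.univ.filter (fun x => x + x = 0) with hEset
  have hE : ∀ x : G, x ∈ Eset ↔ x + x = 0 := by
    intro x; rw [hEset, Finset.mem_filter]; simp
  set Hset : Finset G := Finset.univ.filter (fun x => m • x = 0) with hHset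
  have hH : ∀ x : G, x ∈ Hset ↔ m • x = 0 := by
    intro x; rw [hHset, Finset.mem_filter]; simp
  set H0 : Finset G := Hset.erase 0 with hH0
  -- basic smul facts
  have hε2 : ∀ x : G, m • x + m • x = 0 := by
    intro x
    rw [← two_nsmul, ← mul_nsmul', hexp]
  have hεπ : ∀ x : G, m • x + π x = x := by
    intro x
    have h2 : m • x + (m+1) • x = (2*m+1) • x := by rw [← add_nsmul]; ring_nf
    rw [hπ]; dsimp only
    rw [h2, add_nsmul, hexp, zero_add, one_nsmul]
  have hπH : ∀ x : G, π x ∈ Hset := by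
    intro x
    rw [hH, hπ]
    dsimp only
    rw [← mul_nsmul, show (m+1) * m = (2*m) * (j+1) by rw [hm]; ring, mul_nsmul, hexp,
      smul_zero]
  -- each element of A has nonzero odd part
  have hπ0 : ∀ a ∈ A, π a ≠ 0 := by
    intro a ha h0
    have h1 : a + a = 0 := by
      have h2 := hεπ a
      rw [h0, add_zero] at h2
      rw [← h2]; exact hε2 a
    exact no_pair hA ha ha h1
  have h0H : (0:G) ∈ Hset := (hH 0).2 (smul_zero m)
  -- |Eset| * |Hset| = |G|
  have hprod : Eset.card * Hset.card = Fintype.card G := by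
    rw [← Finset.card_product, ← Finset.card_univ]
    apply Finset.card_bij' (fun (p : G × G) _ => p.1 + p.2)
      (fun (x : G) _ => ((m • x : G), π x))
    · intro p hp
      exact Finset.mem_univ _
    · intro x _
      rw [Finset.mem_product]
      constructor
      · exact (hE _).2 (hε2 x)
      · exact hπH x
    · intro p hp
      rw [Finset.mem_product] at hp
      obtain ⟨h1, h2⟩ := hp
      rw [hE] at h1
      rw [hH] at h2
      have hm1 : m • p.1 = p.1 := nsmul_odd_fix m j rfl p.1 h1
      have he : m • (p.1 + p.2) = p.1 := by rw [smul_add, hm1, h2, add_zero]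
      have hp2 : π (p.1 + p.2) = p.2 := by
        have h3 := hεπ (p.1 + p.2)
        rw [he] at h3
        have := add_left_cancel (a := p.1) (b := π (p.1+p.2)) (c := p.2) (by rw [h3])
        exact this
      rw [he, hp2]
    · intro x _
      exact hεπ x
  have hEord : Nat.card {x : G // 2 • x = 0} = Eset.card := by
    rw [Nat.card_eq_fintype_card, Fintype.card_subtype]
    congr 1
    apply Finset.filter_congr
    intro x _
    rw [two_nsmul]
  -- the counting function
  set N : G → ℕ := fun y => (A.filter (fun a => π a = y ∨ π a = -y)).card with hN
  have hπHm : ∀ x : G, m • π x = 0 := fun x => (hH _).1 (hπH x)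
  -- sum of N over H0 is 2|A|
  have hsum1 : ∑ y ∈ H0, N y = 2 * A.card := by
    have : ∀ y ∈ H0, N y = ∑ a ∈ A, if π a = y ∨ π a = -y then 1 else 0 := by
      intro y _
      rw [hN]; dsimp only; rw [Finset.card_filter]
    rw [Finset.sum_congr rfl this, Finset.sum_comm]
    have inner : ∀ a ∈ A, (∑ y ∈ H0, if π a = y ∨ π a = -y then 1 else 0) = 2 := by
      intro a ha
      rw [← Finset.card_filter]
      have hfe : H0.filter (fun y => π a = y ∨ π a = -y) = {π a, -π a} := by
        ext z
        simp only [Finset.mem_filter, Finset.mem_insert, Finset.mem_singleton, hH0,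
          Finset.mem_erase]
        constructor
        · rintro ⟨_, h | h⟩
          · exact Or.inl h.symm
          · right
            rw [h, neg_neg]
        · rintro (rfl | rfl)
          · exact ⟨⟨hπ0 a ha, hπH a⟩, Or.inl rfl⟩
          · refine ⟨⟨?_, ?_⟩, Or.inr (by rw [neg_neg])⟩
            · simp only [neg_ne_zero]; exact hπ0 a ha
            · rw [hH, smul_neg, hπHm, neg_zero]
      rw [hfe]
      rw [Finset.card_insert_of_notMem, Finset.card_singleton]
      simp only [Finset.mem_singleton]
      intro h
      have : π a + π a = 0 := by nth_rewrite 2 [h]; simp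
      exact hπ0 a ha (killed m j rfl (π a) this (hπHm a))
    rw [Finset.sum_congr rfl inner, Finset.sum_const, smul_eq_mul, mul_comm]
  -- sum of N(2y) over H0 equals sum of N(y)
  have hinH0 : ∀ y : G, y ∈ H0 ↔ (m • y = 0 ∧ y ≠ 0) := by
    intro y
    rw [hH0, Finset.mem_erase, hH]
    tauto
  have hsum2 : ∑ y ∈ H0, N (y + y) = ∑ y ∈ H0, N y := by
    apply Finset.sum_nbij' (fun y => y + y) (fun y => (j+1) • y)
    · intro y hy
      rw [hinH0] at hy ⊢
      refine ⟨by rw [smul_add, hy.1, add_zero], fun h => hy.2 (killed m j rfl y h hy.1)⟩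
    · intro y hy
      rw [hinH0] at hy ⊢
      constructor
      · rw [smul_comm, hy.1, smul_zero]
      · intro h
        apply hy.2
        have h1 : (m+1) • y = y := by rw [add_nsmul, hy.1, zero_add, one_nsmul]
        have h2 : (m+1) • y = 0 := by
          rw [show m+1 = (j+1)*2 by omega, mul_nsmul, h, smul_zero]
        rw [← h1, h2]
    · intro y hy
      rw [hinH0] at hy
      rw [← two_nsmul, ← mul_nsmul', show (j+1) * 2 = m + 1 by omega, add_nsmul, hy.1,
        zero_add, one_nsmul]
    · intro y hy
      rw [hinH0] at hy
      rw [← two_nsmul, smul_comm, ← mul_nsmul', show (j+1) * 2 = m + 1 by omega, add_nsmul,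
        hy.1, zero_add, one_nsmul]
    · intro y _
      rfl
  -- apply the key step and sum over H0
  have hkey : ∀ y ∈ H0, N y + N (y + y) ≤ Eset.card := by
    intro y hy
    rw [hinH0] at hy
    exact stepC hA m j rfl hexp Eset hE y hy.1 hy.2
  have hH1 : 1 ≤ Hset.card := Finset.card_pos.2 ⟨0, h0H⟩
  have htot : 4 * A.card ≤ (Hset.card - 1) * Eset.card := by
    have h1 : ∑ y ∈ H0, (N y + N (y+y)) ≤ ∑ _y ∈ H0, Eset.card :=
      Finset.sum_le_sum hkey
    rw [Finset.sum_add_distrib, hsum1, hsum2, hsum1, Finset.sum_const, smul_eq_mul] at h1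
    have hcardH0 : H0.card = Hset.card - 1 := Finset.card_erase_of_mem h0H
    rw [hcardH0] at h1
    omega
  have h3 : ((Eset.card : ℚ)) * (Hset.card : ℚ) = (Fintype.card G : ℚ) := by
    exact_mod_cast congrArg (Nat.cast : ℕ → ℚ) hprod
  have h2 : (4 * A.card : ℚ) ≤ ((Hset.card : ℚ) - 1) * Eset.card := by
    calc (4*A.card : ℚ) = ((4*A.card : ℕ) : ℚ) := by push_cast; ring
      _ ≤ (((Hset.card - 1) * Eset.card : ℕ) : ℚ) := by exact_mod_cast htot
      _ = ((Hset.card:ℚ) - 1) * Eset.card := by push_cast [Nat.cast_sub hH1]; ring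
  rw [hEord, le_div_iff₀ (by norm_num : (0:ℚ) < 4)]
  nlinarith [h2, h3]
end

section
/- Let G be a finite abelian group of order n whose exponent κ is divisible by 4. Then G contains a 3-independent set of size n/4. -/
section Aux
open Finset

lemma exists_surj_hom_zmod4 {G : Type*} [AddCommGroup G] [Fintype G]
    (hκ : 4 ∣ AddMonoid.exponent G) :
    ∃ φ : G →+ ZMod 4, Function.Surjective φ := by
  classical
  obtain ⟨ι, hι, n, hn1, ⟨e⟩⟩ := AddCommGroup.equiv_directSum_zmod_of_finite' G
  have hi : ∃ i, 4 ∣ n i := by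
    by_contra h
    push_neg at h
    set O : ℕ := ∏ i, ordCompl[2] (n i) with hO
    have hOodd : ¬ 2 ∣ O := by
      intro h2
      obtain ⟨i, _, hdvd⟩ := (Nat.Prime.prime Nat.prime_two).dvd_finset_prod_iff _ |>.1 h2
      exact Nat.not_dvd_ordCompl Nat.prime_two (by have := hn1 i; omega) hdvd
    have hdvd : AddMonoid.exponent G ∣ 2 * O := by
      rw [AddMonoid.exponent_dvd_iff_forall_nsmul_eq_zero]
      intro g
      apply e.injective
      rw [map_nsmul, map_zero]
      refine DFinsupp.ext fun i => ?_
      rw [DFinsupp.smul_apply, DFinsupp.zero_apply]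
      have hni : n i ∣ 2 * O := by
        have h1 : ordProj[2] (n i) ∣ 2 := by
          have hne : n i ≠ 0 := by have := hn1 i; omega
          have hle : (n i).factorization 2 ≤ 1 := by
            by_contra hgt
            exact h i (by
              have : 2 ^ 2 ∣ n i :=
                (Nat.Prime.pow_dvd_iff_le_factorization Nat.prime_two hne).2 (by omega)
              simpa using this)
          calc ordProj[2] (n i) ∣ 2 ^ 1 := pow_dvd_pow 2 hle
          _ = 2 := pow_one 2
        have h2 : ordCompl[2] (n i) ∣ O := Finset.dvd_prod_of_mem _ (mem_univ i)
        calc n i = ordProj[2] (n i) * ordCompl[2] (n i) :=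
          (Nat.ordProj_mul_ordCompl_eq_self _ _).symm
        _ ∣ 2 * O := mul_dvd_mul h1 h2
      obtain ⟨k, hk⟩ := hni
      rw [hk, mul_nsmul]
      have : (n i) • ((e g) i) = 0 := by
        rw [nsmul_eq_mul, ZMod.natCast_self, zero_mul]
      rw [this, smul_zero]
      
    have : (4 : ℕ) ∣ 2 * O := hκ.trans hdvd
    omega
  obtain ⟨i, h4⟩ := hi
  refine ⟨{ toFun := fun x => ZMod.castHom h4 (ZMod 4) (e x i)
            map_zero' := by simp
            map_add' := by
              intro x y
              show ZMod.castHom h4 (ZMod 4) (e (x + y) i) = _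
              rw [map_add, DFinsupp.add_apply, map_add] }, ?_⟩
  intro z
  obtain ⟨k, rfl⟩ := ZMod.intCast_surjective z
  refine ⟨e.symm (DFinsupp.single i (k : ZMod (n i))), ?_⟩
  simp only [AddMonoidHom.coe_mk, ZeroHom.coe_mk]
  rw [e.apply_symm_apply, DFinsupp.single_eq_same, map_intCast]


lemma card_fiber_four {G : Type*} [AddCommGroup G] [Fintype G]
    (φ : G →+ ZMod 4) (hs : Function.Surjective φ) :
    4 * (univ.filter fun x => φ x = 1).card = Fintype.card G := by
  classical
  have key : ∀ z : ZMod 4,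
      (univ.filter fun x => φ x = z).card = (univ.filter fun x => φ x = 1).card := by
    intro z
    obtain ⟨d, hd⟩ := hs (z - 1)
    refine (Finset.card_bij' (fun x _ => x - d) (fun x _ => x + d) ?_ ?_ ?_ ?_)
    · intro a ha
      simp only [mem_filter, mem_univ, true_and] at ha ⊢
      rw [map_sub, ha, hd]; ring
    · intro a ha
      simp only [mem_filter, mem_univ, true_and] at ha ⊢
      rw [map_add, ha, hd]; ring
    · intro a _; simp
    · intro a _; simp
  have hcard : Fintype.card G = ∑ z : ZMod 4, (univ.filter fun x => φ x = z).card := by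
    rw [← Finset.card_univ]
    exact Finset.card_eq_sum_card_fiberwise (fun x _ => mem_univ (φ x))
  rw [hcard, Finset.sum_congr rfl (fun z _ => key z), Finset.sum_const, Finset.card_univ,
    ZMod.card, smul_eq_mul]

lemma indep_of_fiber {G : Type*} [AddCommGroup G] (φ : G →+ ZMod 4)
    (A : Finset G) (hA : ∀ x ∈ A, φ x = 1) : IsTIndep 3 A := by
  classical
  intro c hc0 habs hsum x
  by_contra hx
  have hxA : x ∈ A := by by_contra h; exact hx (hc0 x h)
  -- the sum of coefficients is divisible by 4
  have hS4 : ((∑ y ∈ A, c y : ℤ) : ZMod 4) = 0 := by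
    have h1 := congrArg φ hsum
    rw [map_sum, map_zero] at h1
    have h2 : ∀ y ∈ A, φ (c y • y) = ((c y : ℤ) : ZMod 4) := by
      intro y hy
      rw [map_zsmul, hA y hy, zsmul_eq_mul, mul_one]
    rw [Finset.sum_congr rfl h2] at h1
    rw [Int.cast_sum]
    exact h1
  have hSdvd : (4 : ℤ) ∣ ∑ y ∈ A, c y :=
    (ZMod.intCast_zmod_eq_zero_iff_dvd _ 4).1 hS4
  have hSabs : |∑ y ∈ A, c y| ≤ 3 :=
    le_trans (Finset.abs_sum_le_sum_abs _ _) habs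
  have hS0 : (∑ y ∈ A, c y) = 0 := by
    by_contra hS
    have h4 : (4 : ℤ) ≤ |∑ y ∈ A, c y| :=
      Int.le_of_dvd (abs_pos.2 hS) ((dvd_abs _ _).2 hSdvd)
    omega
  set T := A.filter (fun y => c y ≠ 0) with hT
  have hxT : x ∈ T := mem_filter.2 ⟨hxA, hx⟩
  have hTsub : T ⊆ A := Finset.filter_subset _ _
  have hzero : ∀ y ∈ A, y ∉ T → c y = 0 := by
    intro y hyA hyT
    by_contra h0
    exact hyT (mem_filter.2 ⟨hyA, h0⟩)
  have hsumT : (∑ y ∈ T, c y) = 0 := by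
    rw [Finset.sum_subset hTsub (fun y h1 h2 => hzero y h1 h2)]; exact hS0
  have habsT : (∑ y ∈ T, |c y|) ≤ 3 := by
    rw [Finset.sum_subset hTsub (fun y h1 h2 => by rw [hzero y h1 h2, abs_zero])]
    exact habs
  have hsmulT : (∑ y ∈ T, c y • y) = 0 := by
    rw [Finset.sum_subset hTsub (fun y h1 h2 => by rw [hzero y h1 h2, zero_smul])]
    exact hsum
  -- the sum of |c| over T is even
  have heven : (2 : ℤ) ∣ ∑ y ∈ T, |c y| := by
    have h1 : (∑ y ∈ T, |c y|) = ∑ y ∈ T, (|c y| - c y) := by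
      rw [Finset.sum_sub_distrib, hsumT, sub_zero]
    rw [h1]
    refine Finset.dvd_sum fun y _ => ?_
    rcases abs_cases (c y) with ⟨h, _⟩ | ⟨h, _⟩
    · rw [h]; simp
    · rw [h]; exact ⟨-(c y), by ring⟩
  have hcardT : T.card ≤ (∑ y ∈ T, |c y|) := by
    calc (T.card : ℤ) = ∑ _y ∈ T, 1 := by simp
    _ ≤ ∑ y ∈ T, |c y| := Finset.sum_le_sum fun y hy => by
        exact Int.one_le_abs (mem_filter.1 hy).2
  have hTne : T.Nonempty := ⟨x, hxT⟩
  have hTcard : T.card ≤ 2 := by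
    have h2 : (∑ y ∈ T, |c y|) ≤ 2 := by omega
    have := hcardT.trans h2
    exact_mod_cast this
  interval_cases h : T.card
  · exact absurd (Finset.card_eq_zero.1 h ▸ hxT) (Finset.notMem_empty x)
  · obtain ⟨a, ha⟩ := Finset.card_eq_one.1 h
    have hax : a ∈ T := ha ▸ Finset.mem_singleton_self a
    have : c a = 0 := by rw [ha, Finset.sum_singleton] at hsumT; exact hsumT
    exact (mem_filter.1 hax).2 this
  · obtain ⟨a, b, hab, hT2⟩ := Finset.card_eq_two.1 h
    have haT : a ∈ T := by rw [hT2]; exact Finset.mem_insert_self a {b}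
    have hca : c a ≠ 0 := (mem_filter.1 haT).2
    rw [hT2, Finset.sum_pair hab] at hsumT habsT hsmulT
    have hcb : c b = -c a := by omega
    have habs1 : |c a| = 1 := by
      rw [hcb, abs_neg] at habsT
      have h1a : 1 ≤ |c a| := Int.one_le_abs hca
      omega
    have hab0 : c a • (a - b) = 0 := by
      rw [smul_sub, ← hsmulT, hcb, neg_smul]; abel
    have : a - b = 0 := by
      rcases abs_eq (by norm_num : (0:ℤ) ≤ 1) |>.1 habs1 with h1 | h1
      · rw [h1, one_smul] at hab0; exact hab0
      · rw [h1, neg_smul, one_smul, neg_eq_zero] at hab0; exact hab0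
    exact hab (by rw [← sub_eq_zero]; exact this)

end Aux

theorem stmt10 {G : Type*} [AddCommGroup G] [Fintype G]
    (hκ : 4 ∣ AddMonoid.exponent G) :
    ∃ A : Finset G, IsTIndep 3 A ∧ 4 * A.card = Fintype.card G := by
  classical
  obtain ⟨φ, hφ⟩ := exists_surj_hom_zmod4 hκ
  exact ⟨Finset.univ.filter fun x => φ x = 1,
    indep_of_fiber φ _ (fun x hx => (Finset.mem_filter.1 hx).2),
    card_fiber_four φ hφ⟩
end

section
/- Let G be a finite abelian group of order n whose exponent κ is congruent to 2 modulo 4. Then G contains a 3-independent set of size (n - |Ord(G,2)|)/4, where Ord(G,2) = {x ∈ G : 2x = 0}. -/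
theorem stmt11 {G : Type*} [AddCommGroup G] [Fintype G]
    (hκ : AddMonoid.exponent G % 4 = 2) :
    ∃ A : Finset G, IsTIndep 3 A ∧
      4 * A.card = Fintype.card G - Nat.card {x : G // 2 • x = 0} := by
  classical
  set κ := AddMonoid.exponent G with hκdef
  obtain ⟨m, hm⟩ : ∃ m, κ = 2 * (2 * m + 1) := ⟨κ / 4, by omega⟩
  set u : ℕ := 2 * m + 1 with hu
  have hκsmul : ∀ g : G, κ • g = 0 := fun g => AddMonoid.exponent_nsmul_eq_zero g
  have hug2 : ∀ g : G, 2 • (u • g) = 0 := fun g => by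
    rw [← mul_smul, ← hm]; exact hκsmul g
  have huu : ∀ g : G, u • (u • g) = u • g := fun g => by
    rw [← mul_smul]
    have h : u * u = u + m * κ := by rw [hm]; ring
    rw [h, add_smul, mul_smul, hκsmul, smul_zero, add_zero]
  have hfix : ∀ g : G, 2 • g = 0 → u • g = g := fun g h => by
    have h2m : (2 * m) • g = 0 := by rw [mul_comm, mul_smul, h, smul_zero]
    rw [hu, add_smul, h2m, zero_add, one_smul]
  have huzero : ∀ g : G, 2 • g = 0 → u • g = 0 → g = 0 := fun g h2 hu' => by
    have h := hfix g h2; rw [hu'] at h; exact h.symm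
  -- the two subgroups
  set G2 : AddSubgroup G :=
    { carrier := {x | 2 • x = 0}
      zero_mem' := smul_zero 2
      add_mem' := fun {a b} ha hb => by
        simp only [Set.mem_setOf_eq] at *
        rw [smul_add, ha, hb, add_zero]
      neg_mem' := fun {a} ha => by
        simp only [Set.mem_setOf_eq] at *
        rw [smul_neg, ha, neg_zero] } with hG2
  set Gu : AddSubgroup G :=
    { carrier := {x | u • x = 0}
      zero_mem' := smul_zero u
      add_mem' := fun {a b} ha hb => by
        simp only [Set.mem_setOf_eq] at *
        rw [smul_add, ha, hb, add_zero]
      neg_mem' := fun {a} ha => by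
        simp only [Set.mem_setOf_eq] at *
        rw [smul_neg, ha, neg_zero] } with hGu
  have hmem2 : ∀ x : G, x ∈ G2 ↔ 2 • x = 0 := fun x => Iff.rfl
  have hmemu : ∀ x : G, x ∈ Gu ↔ u • x = 0 := fun x => Iff.rfl
  letI : Module (ZMod 2) G2 :=
    AddCommGroup.zmodModule (fun x => Subtype.ext (by
      have := x.2
      simpa using (show 2 • (x : G) = 0 from this)))
  -- an element of order 2
  obtain ⟨g₀, hg₀⟩ := AddMonoid.exists_addOrderOf_eq_exponent
    (AddMonoid.ExponentExists.of_finite (G := G))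
  have hx₀ : u • g₀ ≠ 0 := by
    intro h
    have hdvd : addOrderOf g₀ ∣ u := addOrderOf_dvd_of_nsmul_eq_zero h
    rw [hg₀] at hdvd
    have : κ ≤ u := Nat.le_of_dvd (by omega) hdvd
    omega
  set x0 : G2 := ⟨u • g₀, hug2 g₀⟩ with hx0def
  have hx0 : x0 ≠ 0 := fun h => hx₀ (congrArg Subtype.val h)
  -- a functional separating x0
  obtain ⟨f, hf⟩ : ∃ f : Module.Dual (ZMod 2) G2, f x0 ≠ 0 := by
    by_contra h
    push_neg at h
    exact hx0 ((Module.forall_dual_apply_eq_zero_iff (ZMod 2) x0).mp h)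
  have hf1 : f x0 = 1 := by
    have h01 : ∀ a : ZMod 2, a ≠ 0 → a = 1 := by decide
    exact h01 _ hf
  -- the parity homomorphism
  set ψ : G →+ ZMod 2 :=
    { toFun := fun g => f ⟨u • g, hug2 g⟩
      map_zero' := by
        have h : (⟨u • (0 : G), hug2 0⟩ : G2) = 0 := Subtype.ext (smul_zero u)
        show f ⟨u • (0 : G), hug2 0⟩ = 0
        rw [h, map_zero]
      map_add' := fun a b => by
        have h : (⟨u • (a + b), hug2 _⟩ : G2)
            = ⟨u • a, hug2 a⟩ + ⟨u • b, hug2 b⟩ := Subtype.ext (smul_add u a b)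
        show f ⟨u • (a + b), hug2 _⟩ = f ⟨u • a, hug2 a⟩ + f ⟨u • b, hug2 b⟩
        rw [h, map_add] } with hψdef
  -- the encoding
  set enc : G → ℕ := fun g => ((Fintype.equivFin G) g : ℕ) with henc
  have hencinj : Function.Injective enc := fun a b h =>
    (Fintype.equivFin G).injective (Fin.ext h)
  -- the set
  set P : G → Prop := fun g => ψ g = 1 ∧ enc (g - u • g) < enc (-(g - u • g)) with hP
  set A : Finset G := Finset.univ.filter P with hA
  have hAmem : ∀ g ∈ A, ψ g = 1 ∧ enc (g - u • g) < enc (-(g - u • g)) := fun g hg =>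
    (Finset.mem_filter.mp hg).2
  refine ⟨A, ?_, ?_⟩
  · -- 3-independence
    intro c hc0 hc3 hrel x
    by_cases hxA : x ∈ A
    swap
    · exact hc0 x hxA
    suffices hz : ∑ y ∈ A, |c y| = 0 by
      exact abs_eq_zero.mp
        ((Finset.sum_eq_zero_iff_of_nonneg (fun y _ => abs_nonneg _)).mp hz x hxA)
    -- parity of the coefficient sum
    have hpar : (2 : ℤ) ∣ ∑ y ∈ A, c y := by
      have h0 : ((∑ y ∈ A, c y : ℤ) : ZMod 2) = 0 := by
        push_cast
        calc (∑ y ∈ A, ((c y : ℤ) : ZMod 2))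
            = ∑ y ∈ A, ψ (c y • y) := by
              refine Finset.sum_congr rfl fun y hy => ?_
              rw [map_zsmul, (hAmem y hy).1, zsmul_one]
          _ = ψ (∑ y ∈ A, c y • y) := (map_sum ψ _ A).symm
          _ = 0 := by rw [hrel, map_zero]
      exact (ZMod.intCast_zmod_eq_zero_iff_dvd _ 2).mp h0
    have hpar2 : (2 : ℤ) ∣ ∑ y ∈ A, |c y| := by
      have hsplit : ∑ y ∈ A, |c y| = (∑ y ∈ A, c y) + ∑ y ∈ A, (|c y| - c y) := by
        rw [← Finset.sum_add_distrib]
        exact Finset.sum_congr rfl fun y _ => by ring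
      rw [hsplit]
      refine dvd_add hpar (Finset.dvd_sum fun y _ => ?_)
      rcases abs_choice (c y) with h | h <;> rw [h]
      · exact ⟨0, by ring⟩
      · exact ⟨-c y, by ring⟩
    have hnn : (0 : ℤ) ≤ ∑ y ∈ A, |c y| := Finset.sum_nonneg fun y _ => abs_nonneg _
    have h02 : (∑ y ∈ A, |c y|) = 0 ∨ (∑ y ∈ A, |c y|) = 2 := by omega
    rcases h02 with h02 | h02
    · exact h02
    exfalso
    -- the support
    set T : Finset G := A.filter (fun y => c y ≠ 0) with hT
    have hTA : T ⊆ A := Finset.filter_subset _ _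
    have hTabs : ∑ y ∈ T, |c y| = 2 := by
      have h := Finset.sum_filter_of_ne (s := A) (f := fun y => |c y|)
        (p := fun y => c y ≠ 0) (fun y _ h => abs_ne_zero.mp h)
      rw [hT]
      exact h.trans h02
    have hTrel : ∑ y ∈ T, c y • y = 0 := by
      have h := Finset.sum_filter_of_ne (s := A) (f := fun y => c y • y)
        (p := fun y => c y ≠ 0) (fun y _ h hc => h (by simp [hc]))
      rw [hT]
      exact h.trans hrel
    have hone : ∀ y ∈ T, 1 ≤ |c y| := fun y hy =>
      Int.one_le_abs (Finset.mem_filter.mp hy).2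
    have hcard : T.card ≤ 2 := by
      have h : (T.card : ℤ) ≤ 2 := by
        calc (T.card : ℤ) = ∑ _y ∈ T, (1 : ℤ) := by simp
          _ ≤ ∑ y ∈ T, |c y| := Finset.sum_le_sum hone
          _ = 2 := hTabs
      exact_mod_cast h
    have hTne : T.Nonempty := by
      by_contra h
      rw [Finset.not_nonempty_iff_eq_empty] at h
      rw [h, Finset.sum_empty] at hTabs
      exact absurd hTabs (by norm_num)
    have h12 : T.card = 1 ∨ T.card = 2 := by
      have := Finset.card_pos.mpr hTne
      omega
    rcases h12 with h1 | h2
    · -- one element with coefficient ±2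
      obtain ⟨a, ha⟩ := Finset.card_eq_one.mp h1
      rw [ha, Finset.sum_singleton] at hTabs hTrel
      have haA : a ∈ A := hTA (ha ▸ Finset.mem_singleton_self a)
      have h2a : a + a = 0 := by
        rcases (abs_eq (by norm_num : (0:ℤ) ≤ 2)).mp hTabs with h | h
        · rw [h, two_zsmul] at hTrel; exact hTrel
        · rw [h, neg_smul, neg_eq_zero, two_zsmul] at hTrel; exact hTrel
      have h2a' : 2 • a = 0 := by rw [two_nsmul]; exact h2a
      have hτ : a - u • a = 0 := by rw [hfix a h2a', sub_self]
      have hlt := (hAmem a haA).2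
      rw [hτ, neg_zero] at hlt
      exact lt_irrefl _ hlt
    · -- two elements with coefficients ±1
      obtain ⟨a, b, hab, hT2⟩ := Finset.card_eq_two.mp h2
      rw [hT2, Finset.sum_pair hab] at hTabs hTrel
      have haA : a ∈ A := hTA (hT2 ▸ Finset.mem_insert_self a {b})
      have hbA : a ∈ A → b ∈ A := fun _ =>
        hTA (hT2 ▸ Finset.mem_insert_of_mem (Finset.mem_singleton_self b))
      have hbA' : b ∈ A := hbA haA
      have haT : a ∈ T := hT2 ▸ Finset.mem_insert_self a {b}
      have hbT : b ∈ T := hT2 ▸ Finset.mem_insert_of_mem (Finset.mem_singleton_self b)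
      have h1a : |c a| = 1 ∧ |c b| = 1 := by
        have := hone a haT
        have := hone b hbT
        omega
      have hca := (abs_eq (by norm_num : (0:ℤ) ≤ 1)).mp h1a.1
      have hcb := (abs_eq (by norm_num : (0:ℤ) ≤ 1)).mp h1a.2
      have hab0 : a + b = 0 := by
        rcases hca with h | h <;> rcases hcb with h' | h' <;>
          rw [h, h'] at hTrel <;>
          simp only [one_smul, neg_smul, neg_neg] at hTrel
        · exact hTrel
        · exact absurd (by rw [← sub_eq_add_neg, sub_eq_zero] at hTrel; exact hTrel) hab
        · exact absurd (by
            rw [add_comm, ← sub_eq_add_neg, sub_eq_zero] at hTrel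
            exact hTrel.symm) hab
        · rw [← neg_add, neg_eq_zero] at hTrel; exact hTrel
      have hb : b = -a := by
        rw [add_comm] at hab0
        exact eq_neg_of_add_eq_zero_left hab0
      have hPa := (hAmem a haA).2
      have hPb := (hAmem b hbA').2
      have hτb : b - u • b = -(a - u • a) := by
        rw [hb, smul_neg]
        abel
      rw [hτb, neg_neg] at hPb
      exact lt_asymm hPa hPb
  · -- cardinality
    have hτu : ∀ g : G, u • (g - u • g) = 0 := fun g => by
      rw [smul_sub, huu, sub_self]
    set E : G ≃ ↥G2 × ↥Gu :=
      { toFun := fun g => (⟨u • g, hug2 g⟩, ⟨g - u • g, hτu g⟩)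
        invFun := fun p => (p.1 : G) + (p.2 : G)
        left_inv := fun g => by
          show u • g + (g - u • g) = g
          abel
        right_inv := fun p => by
          obtain ⟨⟨p, hp⟩, ⟨q, hq⟩⟩ := p
          have hp' : 2 • p = 0 := hp
          have hq' : u • q = 0 := hq
          have h1 : u • (p + q) = p := by
            rw [smul_add, hq', add_zero, hfix p hp']
          refine Prod.ext (Subtype.ext ?_) (Subtype.ext ?_)
          · exact h1
          · show (p + q) - u • (p + q) = q
            rw [h1]
            abel } with hE
    set R : ↥Gu → Prop := fun q => enc (q : G) < enc (-(q : G)) with hR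
    have hPiff : ∀ g : G, P g ↔ (f (E g).1 = 1 ∧ R (E g).2) := fun g => Iff.rfl
    have hcardA : A.card
        = Fintype.card {v : ↥G2 // f v = 1} * Fintype.card {q : ↥Gu // R q} := by
      calc A.card = Fintype.card {g : G // P g} := (Fintype.card_subtype P).symm
        _ = Fintype.card {z : ↥G2 × ↥Gu // f z.1 = 1 ∧ R z.2} :=
            Fintype.card_congr (Equiv.subtypeEquiv E hPiff)
        _ = Fintype.card ({v : ↥G2 // f v = 1} × {q : ↥Gu // R q}) :=
            Fintype.card_congr (Equiv.subtypeProdEquivProd (p := fun v : ↥G2 => f v = 1) (q := R))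
        _ = _ := Fintype.card_prod _ _
    have hcardG : Fintype.card G = Fintype.card ↥G2 * Fintype.card ↥Gu := by
      rw [← Fintype.card_prod]
      exact Fintype.card_congr E
    -- counting the G2 half
    have hxx : x0 + x0 = 0 := by
      have h : 2 • (x0 : G) = 0 := x0.2
      rw [two_nsmul] at h
      exact Subtype.ext h
    have ha01 : ∀ a : ZMod 2, a ≠ 1 → a = 0 := by decide
    set e1 : {v : ↥G2 // f v = 1} ≃ {v : ↥G2 // ¬ f v = 1} :=
      { toFun := fun v => ⟨v.1 + x0, by
          rw [map_add, v.2, hf1]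
          decide⟩
        invFun := fun v => ⟨v.1 + x0, by
          rw [map_add, ha01 _ v.2, hf1, zero_add]⟩
        left_inv := fun v => Subtype.ext (by
          show v.1 + x0 + x0 = v.1
          rw [add_assoc, hxx, add_zero])
        right_inv := fun v => Subtype.ext (by
          show v.1 + x0 + x0 = v.1
          rw [add_assoc, hxx, add_zero]) } with he1
    have hG2count : Fintype.card ↥G2 = 2 * Fintype.card {v : ↥G2 // f v = 1} := by
      have h := Finset.card_filter_add_card_filter_not
        (s := (Finset.univ : Finset ↥G2)) (p := fun v => f v = 1)
      have h1 : Fintype.card {v : ↥G2 // f v = 1}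
          = (Finset.univ.filter fun v : ↥G2 => f v = 1).card := Fintype.card_subtype _
      have h2 : Fintype.card {v : ↥G2 // ¬ f v = 1}
          = (Finset.univ.filter fun v : ↥G2 => ¬ f v = 1).card := Fintype.card_subtype _
      have h3 : Fintype.card {v : ↥G2 // f v = 1}
          = Fintype.card {v : ↥G2 // ¬ f v = 1} := Fintype.card_congr e1
      rw [Finset.card_univ] at h
      omega
    -- counting the Gu half
    have hqneg : ∀ q : ↥Gu, q ≠ 0 → (q : G) ≠ -(q : G) := by
      intro q hq hh
      apply hq
      have h2 : 2 • (q : G) = 0 := by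
        rw [two_nsmul]
        nth_rewrite 2 [hh]
        exact add_neg_cancel _
      exact Subtype.ext (huzero _ h2 q.2)
    have hR0 : ¬ R (0 : ↥Gu) := by
      show ¬ enc ((0 : ↥Gu) : G) < enc (-((0 : ↥Gu) : G))
      simp
    have hRne : ∀ q : ↥Gu, R q → q ≠ 0 := fun q h h0 => hR0 (h0 ▸ h)
    set e2 : {q : ↥Gu // R q} ≃ {q : ↥Gu // ¬ R q ∧ q ≠ 0} :=
      { toFun := fun q => ⟨-q.1, by
          refine ⟨?_, ?_⟩
          · show ¬ enc ((-q.1 : ↥Gu) : G) < enc (-((-q.1 : ↥Gu) : G))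
            have hc : ((-q.1 : ↥Gu) : G) = -(q.1 : G) := rfl
            rw [hc, neg_neg]
            have := q.2
            omega
          · intro h0
            exact hRne q.1 q.2 (by rwa [neg_eq_zero] at h0)⟩
        invFun := fun q => ⟨-q.1, by
          have hq0 : q.1 ≠ 0 := q.2.2
          have hne : enc (q.1 : G) ≠ enc (-(q.1 : G)) := fun h => hqneg q.1 hq0 (hencinj h)
          have hle : ¬ enc (q.1 : G) < enc (-(q.1 : G)) := q.2.1
          show enc ((-q.1 : ↥Gu) : G) < enc (-((-q.1 : ↥Gu) : G))
          have hc : ((-q.1 : ↥Gu) : G) = -(q.1 : G) := rfl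
          rw [hc, neg_neg]
          omega⟩
        left_inv := fun q => Subtype.ext (neg_neg q.1)
        right_inv := fun q => Subtype.ext (neg_neg q.1) } with he2
    have hGucount : Fintype.card ↥Gu = 2 * Fintype.card {q : ↥Gu // R q} + 1 := by
      have h := Finset.card_filter_add_card_filter_not
        (s := (Finset.univ : Finset ↥Gu)) (p := R)
      have h2 := Finset.card_filter_add_card_filter_not
        (s := Finset.univ.filter (fun q : ↥Gu => ¬ R q)) (p := fun q => q = 0)
      have h3 : (Finset.univ.filter (fun q : ↥Gu => ¬ R q)).filter (fun q => q = 0)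
          = {(0 : ↥Gu)} := by
        ext q
        simp only [Finset.mem_filter, Finset.mem_univ, true_and, Finset.mem_singleton]
        exact ⟨fun hh => hh.2, fun hh => ⟨hh ▸ hR0, hh⟩⟩
      have h3' : ((Finset.univ.filter (fun q : ↥Gu => ¬ R q)).filter
          (fun q => q = 0)).card = 1 := by rw [h3]; exact Finset.card_singleton _
      have h4 : ((Finset.univ.filter (fun q : ↥Gu => ¬ R q)).filter
          (fun q => ¬ q = 0)).card = Fintype.card {q : ↥Gu // ¬ R q ∧ q ≠ 0} := by
        rw [Finset.filter_filter]
        exact (Fintype.card_subtype _).symm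
      have h5 : Fintype.card {q : ↥Gu // R q} = (Finset.univ.filter R).card :=
        Fintype.card_subtype _
      have h6 : Fintype.card {q : ↥Gu // R q}
          = Fintype.card {q : ↥Gu // ¬ R q ∧ q ≠ 0} := Fintype.card_congr e2
      rw [Finset.card_univ] at h
      omega
    have hNat : Nat.card {x : G // 2 • x = 0} = Fintype.card ↥G2 := by
      rw [Nat.card_eq_fintype_card]
      exact Fintype.card_congr (Equiv.subtypeEquivRight fun x => Iff.rfl)
    have key : Fintype.card G = 4 * A.card + Nat.card {x : G // 2 • x = 0} := by
      rw [hcardG, hNat, hcardA, hG2count, hGucount]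
      ring
    omega
end

section
/- Let G be a finite abelian group of order n with exponent κ, and let d be an odd positive integer dividing κ. Then G contains a 3-independent set of size ⌊(d+1)/6⌋·(n/d). -/
open Finset Function


lemma zcore {m : ℕ} (hm : 1 ≤ m) (f : ℕ → ℤ)
    (hw : ∑ k ∈ Finset.Ico m (2*m), |f k| ≤ 3)
    (hz : ∑ k ∈ Finset.Ico m (2*m), f k * k = 0) :
    ∀ k ∈ Finset.Ico m (2*m), f k = 0 := by
  classical
  set s := (Finset.Ico m (2*m)).filter (fun k => f k ≠ 0) with hsdef
  have hsub : ∀ k ∈ s, m ≤ k ∧ k < 2*m ∧ f k ≠ 0 := by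
    intro k hk
    obtain ⟨h1, h2⟩ := Finset.mem_filter.mp hk
    obtain ⟨h3, h4⟩ := Finset.mem_Ico.mp h1
    exact ⟨h3, h4, h2⟩
  have hws : ∑ k ∈ s, |f k| ≤ 3 :=
    le_trans (Finset.sum_le_sum_of_subset_of_nonneg (Finset.filter_subset _ _)
      (fun k _ _ => abs_nonneg _)) hw
  have hzs : ∑ k ∈ s, f k * k = 0 := by
    rw [hsdef, Finset.sum_filter_of_ne (fun x _ h => by
      intro hf; apply h; rw [hf, zero_mul])]
    exact hz
  have hone : ∀ k ∈ s, 1 ≤ |f k| := fun k hk => Int.one_le_abs (hsub k hk).2.2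
  have hcard : s.card ≤ 3 := by
    have h : (s.card : ℤ) ≤ 3 := by
      calc (s.card : ℤ) = ∑ _k ∈ s, 1 := by simp
        _ ≤ ∑ k ∈ s, |f k| := Finset.sum_le_sum hone
        _ ≤ 3 := hws
    exact_mod_cast h
  suffices hs0 : s = ∅ by
    intro k hk
    by_contra hfk
    have : k ∈ s := Finset.mem_filter.mpr ⟨hk, hfk⟩
    simp [hs0] at this
  by_contra hne
  have hcard1 : 1 ≤ s.card := Finset.card_pos.mpr (Finset.nonempty_of_ne_empty hne)
  have h123 : s.card = 1 ∨ s.card = 2 ∨ s.card = 3 := by omega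
  rcases h123 with h|h|h
  · obtain ⟨a, ha⟩ := Finset.card_eq_one.mp h
    have hA := hsub a (by simp [ha])
    rw [ha, Finset.sum_singleton] at hzs
    rcases mul_eq_zero.mp hzs with h'|h'
    · exact hA.2.2 h'
    · have : (a:ℤ) = 0 := h'
      omega
  · obtain ⟨a, b, hab, hs2⟩ := Finset.card_eq_two.mp h
    have hA := hsub a (by simp [hs2])
    have hB := hsub b (by simp [hs2])
    rw [hs2, Finset.sum_pair hab] at hzs hws
    obtain ⟨ha1, ha2, hx0⟩ := hA
    obtain ⟨hb1, hb2, hy0⟩ := hB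
    rw [Int.abs_eq_natAbs, Int.abs_eq_natAbs] at hws
    have hxb : -3 ≤ f a ∧ f a ≤ 3 := by omega
    have hyb : -3 ≤ f b ∧ f b ≤ 3 := by omega
    obtain ⟨hx1, hx2⟩ := hxb
    obtain ⟨hy1, hy2⟩ := hyb
    interval_cases h1 : (f a) <;> interval_cases h2 : (f b) <;> omega
  · obtain ⟨a, b, c, hab, hac, hbc, hs3⟩ := Finset.card_eq_three.mp h
    have hA := hsub a (by simp [hs3])
    have hB := hsub b (by simp [hs3])
    have hC := hsub c (by simp [hs3])
    rw [hs3, Finset.sum_insert (by simp [hab, hac]), Finset.sum_pair hbc] at hzs hws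
    obtain ⟨ha1, ha2, hx0⟩ := hA
    obtain ⟨hb1, hb2, hy0⟩ := hB
    obtain ⟨hc1, hc2, hz0⟩ := hC
    rw [Int.abs_eq_natAbs, Int.abs_eq_natAbs, Int.abs_eq_natAbs] at hws
    have hxb : -1 ≤ f a ∧ f a ≤ 1 := by omega
    have hyb : -1 ≤ f b ∧ f b ≤ 1 := by omega
    have hzb : -1 ≤ f c ∧ f c ≤ 1 := by omega
    obtain ⟨hx1, hx2⟩ := hxb
    obtain ⟨hy1, hy2⟩ := hyb
    obtain ⟨hz1, hz2⟩ := hzb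
    interval_cases h1 : (f a) <;> interval_cases h2 : (f b) <;> interval_cases h3 : (f c) <;> omega


lemma pow_prime_dvd_lcm {ι : Type*} (s : Finset ι) (n : ι → ℕ) (hn : ∀ i ∈ s, n i ≠ 0)
    {q k : ℕ} (hq : q.Prime) (hk : 0 < k) (h : q ^ k ∣ s.lcm n) : ∃ i ∈ s, q ^ k ∣ n i := by
  classical
  induction s using Finset.induction with
  | empty =>
      exfalso
      rw [Finset.lcm_empty] at h
      have h1 := Nat.eq_one_of_dvd_one (by exact_mod_cast h)
      have h2 := hq.one_lt
      have hk1 : q ^ 1 ≤ q ^ k := Nat.pow_le_pow_right hq.pos hk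
      simp at hk1
      omega
  | @insert a t ha ih =>
      rw [Finset.lcm_insert] at h
      have hna : n a ≠ 0 := hn a (Finset.mem_insert_self a t)
      have hnt : ∀ i ∈ t, n i ≠ 0 := fun i hi => hn i (Finset.mem_insert_of_mem hi)
      have hlt : (t.lcm n : ℕ) ≠ 0 := by
        intro h0
        rw [Finset.lcm_eq_zero_iff] at h0
        obtain ⟨i, hi, h0'⟩ := h0
        exact hnt i (Finset.mem_coe.mp hi) h0'
      have hsplit : q ^ k ∣ n a ∨ q ^ k ∣ t.lcm n := by
        have hl0 : Nat.lcm (n a) (t.lcm n) ≠ 0 := Nat.lcm_ne_zero hna hlt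
        rw [lcm_eq_nat_lcm] at h
        rw [hq.pow_dvd_iff_le_factorization hl0, Nat.factorization_lcm hna hlt,
          Finsupp.sup_apply, le_sup_iff] at h
        rcases h with h|h
        · exact Or.inl ((hq.pow_dvd_iff_le_factorization hna).mpr h)
        · exact Or.inr ((hq.pow_dvd_iff_le_factorization hlt).mpr h)
      rcases hsplit with h'|h'
      · exact ⟨a, Finset.mem_insert_self a t, h'⟩
      · obtain ⟨i, hi, hd⟩ := ih hnt h'
        exact ⟨i, Finset.mem_insert_of_mem hi, hd⟩

lemma exists_surj_pp {G : Type*} [AddCommGroup G] [Finite G]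
    {q f : ℕ} (hq : q.Prime) (hdvd : q ^ f ∣ AddMonoid.exponent G) :
    ∃ φ : G →+ ZMod (q ^ f), Surjective φ := by
  rcases Nat.eq_zero_or_pos f with hf | hf
  · subst hf
    refine ⟨0, fun y => ⟨0, ?_⟩⟩
    have : Subsingleton (ZMod (q ^ 0)) := by rw [pow_zero]; infer_instance
    exact Subsingleton.elim _ _
  obtain ⟨ι, hι, n, hn, ⟨e⟩⟩ := AddCommGroup.equiv_directSum_zmod_of_finite' G
  let e2 : G ≃+ ((i : ι) → ZMod (n i)) := e.trans (DirectSum.addEquivProd _)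
  have hexp : AddMonoid.exponent G = Finset.univ.lcm n := by
    rw [AddMonoid.exponent_eq_of_addEquiv e2, AddMonoid.exponent_pi]
    congr 1
    funext i
    exact ZMod.exponent (n i)
  rw [hexp] at hdvd
  obtain ⟨i, _, hdvdi⟩ := pow_prime_dvd_lcm Finset.univ n
    (fun i _ => by have := hn i; omega) hq hf hdvd
  haveI : NeZero (q ^ f) := ⟨(pow_pos hq.pos f).ne'⟩
  let ψ : ZMod (n i) →+* ZMod (q ^ f) := ZMod.castHom hdvdi (ZMod (q ^ f))
  refine ⟨ψ.toAddMonoidHom.comp ((Pi.evalAddMonoidHom (fun i => ZMod (n i)) i).comp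
    e2.toAddMonoidHom), ?_⟩
  have hψ : Surjective ψ := by
    intro y
    refine ⟨((y.val : ℕ) : ZMod (n i)), ?_⟩
    rw [map_natCast, ZMod.natCast_zmod_val]
  exact hψ.comp ((Function.surjective_eval i).comp e2.surjective)

lemma exists_surj_pair {G : Type*} [AddCommGroup G] [Finite G] {a b : ℕ}
    (ha : 0 < a) (hb : 0 < b) (hab : Nat.Coprime a b)
    (φ1 : G →+ ZMod a) (hs1 : Surjective φ1)
    (φ2 : G →+ ZMod b) (hs2 : Surjective φ2) :
    ∃ φ : G →+ ZMod (a * b), Surjective φ := by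
  haveI : NeZero a := ⟨ha.ne'⟩
  haveI : NeZero b := ⟨hb.ne'⟩
  let p : G →+ ZMod a × ZMod b := φ1.prod φ2
  have hrange : p.range = ⊤ := by
    have h1 : Nat.card (ZMod a) ∣ Nat.card p.range := by
      refine AddSubgroup.card_dvd_of_surjective
        ((AddMonoidHom.fst (ZMod a) (ZMod b)).comp p.range.subtype) ?_
      intro y
      obtain ⟨g, hg⟩ := hs1 y
      exact ⟨⟨p g, AddMonoidHom.mem_range.mpr ⟨g, rfl⟩⟩, hg⟩
    have h2 : Nat.card (ZMod b) ∣ Nat.card p.range := by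
      refine AddSubgroup.card_dvd_of_surjective
        ((AddMonoidHom.snd (ZMod a) (ZMod b)).comp p.range.subtype) ?_
      intro y
      obtain ⟨g, hg⟩ := hs2 y
      exact ⟨⟨p g, AddMonoidHom.mem_range.mpr ⟨g, rfl⟩⟩, hg⟩
    rw [Nat.card_zmod] at h1 h2
    have h3 : a * b ∣ Nat.card p.range := hab.mul_dvd_of_dvd_of_dvd h1 h2
    have h4 : Nat.card p.range ∣ a * b := by
      have := AddSubgroup.card_addSubgroup_dvd_card p.range
      rwa [Nat.card_prod, Nat.card_zmod, Nat.card_zmod] at this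
    refine AddSubgroup.eq_top_of_card_eq _ ?_
    rw [Nat.card_prod, Nat.card_zmod, Nat.card_zmod]
    exact Nat.dvd_antisymm h4 h3
  have hp : Surjective p := AddMonoidHom.range_eq_top.mp hrange
  let crt := ZMod.chineseRemainder hab
  exact ⟨(crt.symm.toAddEquiv.toAddMonoidHom).comp p,
    crt.symm.surjective.comp hp⟩

lemma exists_surj_zmod {G : Type*} [AddCommGroup G] [Finite G] (d : ℕ) (hd0 : 0 < d)
    (hdvd : d ∣ AddMonoid.exponent G) : ∃ φ : G →+ ZMod d, Surjective φ := by
  induction d using Nat.strong_induction_on with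
  | _ d ih =>
    rcases eq_or_lt_of_le (Nat.one_le_iff_ne_zero.mpr hd0.ne') with h1 | h1
    · refine ⟨0, fun y => ⟨0, ?_⟩⟩
      have : Subsingleton (ZMod d) := by rw [← h1]; infer_instance
      exact Subsingleton.elim _ _
    · set q := d.minFac with hqdef
      have hq : q.Prime := Nat.minFac_prime (by omega)
      set f := d.factorization q with hfdef
      have hf : 0 < f := hq.factorization_pos_of_dvd (by omega) (Nat.minFac_dvd d)
      set d' := d / q ^ f with hd'def
      have heq : q ^ f * d' = d := Nat.ordProj_mul_ordCompl_eq_self d q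
      have hcop : (q ^ f).Coprime d' := (Nat.coprime_ordCompl hq (by omega)).pow_left _
      have hppos : 0 < q ^ f := pow_pos hq.pos f
      have hpp1 : 1 < q ^ f := by
        calc 1 < q := hq.one_lt
        _ = q ^ 1 := (pow_one q).symm
        _ ≤ q ^ f := Nat.pow_le_pow_right hq.pos hf
      have hd'0 : 0 < d' := Nat.ordCompl_pos q (by omega)
      have hd'lt : d' < d := Nat.div_lt_self hd0 hpp1
      obtain ⟨φ1, hφ1⟩ := exists_surj_pp hq ((Nat.ordProj_dvd d q).trans hdvd)
      obtain ⟨φ2, hφ2⟩ := ih d' hd'lt hd'0 ((Nat.ordCompl_dvd d q).trans hdvd)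
      obtain ⟨φ, hφ⟩ := exists_surj_pair hppos hd'0 hcop φ1 hφ1 φ2 hφ2
      rw [← heq]
      exact ⟨φ, hφ⟩

lemma indepB {d m : ℕ} (hm : 1 ≤ m) (hd : 6*m ≤ d + 1) (hd0 : 0 < d) :
    IsTIndep 3 ((Finset.Ico m (2*m)).image (Nat.cast : ℕ → ZMod d)) ∧
      ((Finset.Ico m (2*m)).image (Nat.cast : ℕ → ZMod d)).card = m := by
  haveI : NeZero d := ⟨hd0.ne'⟩
  have hinj : ∀ x ∈ Finset.Ico m (2*m), ∀ y ∈ Finset.Ico m (2*m),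
      (x : ZMod d) = (y : ZMod d) → x = y := by
    intro x hx y hy hxy
    have hx' : x < d := by have := (Finset.mem_Ico.mp hx).2; omega
    have hy' : y < d := by have := (Finset.mem_Ico.mp hy).2; omega
    have := congrArg ZMod.val hxy
    rwa [ZMod.val_cast_of_lt hx', ZMod.val_cast_of_lt hy'] at this
  constructor
  · intro c hsupp hw hz
    have hw' : ∑ k ∈ Finset.Ico m (2*m), |c (k : ZMod d)| ≤ 3 := by
      rwa [Finset.sum_image hinj] at hw
    have hz' : ∑ k ∈ Finset.Ico m (2*m), c (k : ZMod d) • ((k : ℕ) : ZMod d) = 0 := by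
      rwa [Finset.sum_image hinj] at hz
    set S : ℤ := ∑ k ∈ Finset.Ico m (2*m), c (k : ZMod d) * (k : ℤ) with hS
    have hcast : ((S : ℤ) : ZMod d) = 0 := by
      have heq : ((S : ℤ) : ZMod d)
          = ∑ k ∈ Finset.Ico m (2*m), c (k : ZMod d) • ((k : ℕ) : ZMod d) := by
        rw [hS]
        push_cast
        refine Finset.sum_congr rfl fun k _ => ?_
        rw [zsmul_eq_mul]
      rw [heq, hz']
    have hdvdS : (d : ℤ) ∣ S := by rwa [ZMod.intCast_zmod_eq_zero_iff_dvd] at hcast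
    have habs : |S| < d := by
      have hb1 : |S| ≤ ∑ k ∈ Finset.Ico m (2*m), |c (k : ZMod d)| * (2*(m:ℤ) - 1) := by
        calc |S| ≤ ∑ k ∈ Finset.Ico m (2*m), |c (k : ZMod d) * (k : ℤ)| :=
              Finset.abs_sum_le_sum_abs _ _
          _ ≤ ∑ k ∈ Finset.Ico m (2*m), |c (k : ZMod d)| * (2*(m:ℤ) - 1) := by
              refine Finset.sum_le_sum fun k hk => ?_
              rw [abs_mul, Int.abs_natCast]
              refine mul_le_mul_of_nonneg_left ?_ (abs_nonneg _)
              have := (Finset.mem_Ico.mp hk).2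
              omega
      have hb2 : (∑ k ∈ Finset.Ico m (2*m), |c (k : ZMod d)|) * (2*(m:ℤ) - 1)
          ≤ 3 * (2*(m:ℤ) - 1) := by
        refine mul_le_mul_of_nonneg_right hw' ?_
        have : (1:ℤ) ≤ (m:ℤ) := by exact_mod_cast hm
        linarith
      rw [← Finset.sum_mul] at hb1
      have : (3 : ℤ) * (2*(m:ℤ) - 1) < d := by
        have : 6*m ≤ d + 1 := hd
        omega
      linarith
    have hS0 : S = 0 := Int.eq_zero_of_abs_lt_dvd hdvdS habs
    have hkey := zcore hm (fun k => c (k : ZMod d)) hw' hS0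
    intro x
    by_cases hx : x ∈ (Finset.Ico m (2*m)).image (Nat.cast : ℕ → ZMod d)
    · obtain ⟨k, hk, rfl⟩ := Finset.mem_image.mp hx
      exact hkey k hk
    · exact hsupp x hx
  · rw [Finset.card_image_of_injOn fun x hx y hy hxy =>
      hinj x (Finset.mem_coe.mp hx) y (Finset.mem_coe.mp hy) hxy]
    rw [Nat.card_Ico]
    omega

lemma transfer {G H : Type*} [AddCommGroup G] [AddCommGroup H] [Fintype G]
    [DecidableEq G] [DecidableEq H]
    (φ : G →+ H) (B : Finset H) (hB : IsTIndep 3 B) :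
    IsTIndep 3 (Finset.univ.filter (fun x => φ x ∈ B)) := by
  intro c hsupp hw hz
  have hw3 : ∑ x ∈ Finset.univ.filter (fun x : G => φ x ∈ B), |c x| ≤ 3 := by
    exact_mod_cast hw
  set A : Finset G := Finset.univ.filter (fun x => φ x ∈ B) with hA
  have hmaps : ∀ x ∈ A, φ x ∈ B := fun x hx => (Finset.mem_filter.mp hx).2
  set e : H → ℤ := fun b => ∑ x ∈ A.filter (fun x => φ x = b), c x with he
  set W : H → ℤ := fun b => ∑ x ∈ A.filter (fun x => φ x = b), |c x| with hW
  have heb : ∀ b, e b = 0 := by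
    apply hB
    · intro b hb
      refine Finset.sum_eq_zero fun x hx => ?_
      exfalso
      obtain ⟨hx1, hx2⟩ := Finset.mem_filter.mp hx
      exact hb (hx2 ▸ hmaps x hx1)
    · calc ∑ b ∈ B, |e b|
          ≤ ∑ b ∈ B, W b := Finset.sum_le_sum fun b _ => Finset.abs_sum_le_sum_abs _ _
        _ = ∑ x ∈ A, |c x| := Finset.sum_fiberwise_of_maps_to hmaps _
        _ ≤ 3 := hw3
    · calc ∑ b ∈ B, e b • b
          = ∑ b ∈ B, ∑ x ∈ A.filter (fun x => φ x = b), c x • φ x := by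
            refine Finset.sum_congr rfl fun b hb => ?_
            rw [he]
            rw [Finset.sum_smul]
            refine Finset.sum_congr rfl fun x hx => ?_
            rw [(Finset.mem_filter.mp hx).2]
        _ = ∑ x ∈ A, c x • φ x := Finset.sum_fiberwise_of_maps_to hmaps _
        _ = φ (∑ x ∈ A, c x • x) := by rw [map_sum]; simp
        _ = 0 := by rw [hz, map_zero]
  have hweven : ∀ b : H, Even (W b) := by
    intro b
    have h1 : Even (∑ x ∈ A.filter (fun x => φ x = b), (|c x| - c x)) := by
      refine Finset.even_sum _ fun x _ => ?_
      rcases abs_cases (c x) with ⟨h, _⟩ | ⟨h, _⟩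
      · rw [h]; simp
      · rw [h]; exact ⟨-c x, by ring⟩
    have h2 : ∑ x ∈ A.filter (fun x => φ x = b), (|c x| - c x) = W b - e b := by
      rw [hW, he, Finset.sum_sub_distrib]
    rw [h2, heb b, sub_zero] at h1
    exact h1
  have htot : ∑ b ∈ B, W b ≤ 3 := by
    calc ∑ b ∈ B, W b = ∑ x ∈ A, |c x| := Finset.sum_fiberwise_of_maps_to hmaps _
      _ ≤ 3 := hw3
  have hwnonneg : ∀ b : H, 0 ≤ W b :=
    fun b => Finset.sum_nonneg fun x _ => abs_nonneg _
  intro x₀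
  by_contra hcx
  have hxA : x₀ ∈ A := by
    by_contra h
    exact hcx (hsupp x₀ h)
  set b₀ := φ x₀ with hb₀
  have hb₀B : b₀ ∈ B := hmaps x₀ hxA
  have hx₀F : x₀ ∈ A.filter (fun x => φ x = b₀) := Finset.mem_filter.mpr ⟨hxA, rfl⟩
  have hw₀ge : 1 ≤ W b₀ := by
    have h1 : 1 ≤ |c x₀| := Int.one_le_abs hcx
    have h2 : |c x₀| ≤ W b₀ :=
      Finset.single_le_sum (fun y _ => abs_nonneg (c y)) hx₀F
    linarith
  have hw₀le : W b₀ ≤ 3 := by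
    have h2 := Finset.single_le_sum (f := W) (fun b _ => hwnonneg b) hb₀B
    linarith
  have hw₀2 : W b₀ = 2 := by
    obtain ⟨r, hr⟩ := hweven b₀
    omega
  have hother : ∀ y ∈ A, φ y ≠ b₀ → c y = 0 := by
    intro y hy hyb
    have hrest : ∑ b ∈ B.erase b₀, W b ≤ 1 := by
      have h3 := Finset.add_sum_erase B W hb₀B
      omega
    have hyB : φ y ∈ B.erase b₀ := Finset.mem_erase.mpr ⟨hyb, hmaps y hy⟩
    have hwy : W (φ y) ≤ 1 := by
      have h4 := Finset.single_le_sum (f := W)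
        (fun b _ => hwnonneg b) hyB
      linarith
    have hwy0 : W (φ y) = 0 := by
      obtain ⟨r, hr⟩ := hweven (φ y)
      have h5 := hwnonneg (φ y)
      omega
    have hyF : y ∈ A.filter (fun x => φ x = φ y) := Finset.mem_filter.mpr ⟨hy, rfl⟩
    have h6 : ∑ x ∈ A.filter (fun x => φ x = φ y), |c x| = 0 := hwy0
    have := (Finset.sum_eq_zero_iff_of_nonneg (fun z _ => abs_nonneg (c z))).mp h6 y hyF
    exact abs_eq_zero.mp this
  set F' : Finset G := (A.filter (fun x => φ x = b₀)).filter (fun x => c x ≠ 0) with hF'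
  have hF'mem : ∀ z, z ∈ F' ↔ (z ∈ A ∧ φ z = b₀ ∧ c z ≠ 0) := by
    intro z
    rw [hF']
    simp only [Finset.mem_filter]
    tauto
  have hwF' : ∑ x ∈ F', |c x| = 2 := by
    rw [Finset.sum_subset (Finset.filter_subset _ _)
      (fun z hz hnz => ?_)]
    · exact hw₀2
    · have hcz : c z = 0 := by
        by_contra hcz
        exact hnz ((hF'mem z).mpr ⟨(Finset.mem_filter.mp hz).1, (Finset.mem_filter.mp hz).2, hcz⟩)
      rw [hcz, abs_zero]
  have heF' : ∑ x ∈ F', c x = 0 := by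
    rw [Finset.sum_subset (Finset.filter_subset _ _)
      (fun z hz hnz => ?_)]
    · exact heb b₀
    · by_contra hcz
      exact hnz ((hF'mem z).mpr ⟨(Finset.mem_filter.mp hz).1, (Finset.mem_filter.mp hz).2, hcz⟩)
  have hx₀F' : x₀ ∈ F' := Finset.mem_filter.mpr ⟨hx₀F, hcx⟩
  have hcardF' : F'.card ≤ 2 := by
    have h : (F'.card : ℤ) ≤ 2 := by
      calc (F'.card : ℤ) = ∑ _x ∈ F', 1 := by simp
        _ ≤ ∑ x ∈ F', |c x| := Finset.sum_le_sum fun z hz =>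
            Int.one_le_abs (Finset.mem_filter.mp hz).2
        _ = 2 := hwF'
    exact_mod_cast h
  have hcardF'pos : 1 ≤ F'.card := Finset.card_pos.mpr ⟨x₀, hx₀F'⟩
  have hcard12 : F'.card = 1 ∨ F'.card = 2 := by omega
  rcases hcard12 with h|h
  · obtain ⟨u, hu⟩ := Finset.card_eq_one.mp h
    have hx₀u : x₀ = u := by
      have h7 := hx₀F'
      rw [hu] at h7
      exact Finset.mem_singleton.mp h7
    rw [hu, Finset.sum_singleton] at heF'
    exact hcx (hx₀u ▸ heF')
  · obtain ⟨u, v, huv, hF2⟩ := Finset.card_eq_two.mp h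
    have hu : u ∈ F' := by rw [hF2]; simp
    have hcu : c u ≠ 0 := (Finset.mem_filter.mp hu).2
    rw [hF2, Finset.sum_pair huv] at heF' hwF'
    have hcu1 : c u = 1 ∨ c u = -1 := by
      rw [Int.abs_eq_natAbs, Int.abs_eq_natAbs] at hwF'
      omega
    have hzred : ∑ x ∈ A, c x • x = c u • u + c v • v := by
      have hsub : F' ⊆ A := (Finset.filter_subset _ _).trans (Finset.filter_subset _ _)
      rw [← Finset.sum_subset hsub (fun z hz hnz => ?_), hF2, Finset.sum_pair huv]
      have hcz : c z = 0 := by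
        by_contra hcz
        have hzb : φ z = b₀ := by
          by_contra hzb
          exact hcz (hother z hz hzb)
        exact hnz ((hF'mem z).mpr ⟨hz, hzb, hcz⟩)
      rw [hcz, zero_smul]
    rw [hzred] at hz
    have hcv : c v = -c u := by omega
    rw [hcv] at hz
    have huv' : u = v := by
      rcases hcu1 with h1|h1 <;> rw [h1] at hz
      · have h8 : u - v = 0 := by
          simpa [sub_eq_add_neg] using hz
        exact sub_eq_zero.mp h8
      · have h8 : v - u = 0 := by
          simp only [neg_smul, one_smul, neg_neg] at hz
          rw [add_comm] at hz
          simpa [sub_eq_add_neg] using hz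
        exact (sub_eq_zero.mp h8).symm
    exact huv huv'


lemma card_filter_preimage {G : Type*} [AddCommGroup G] [Fintype G] [DecidableEq G]
    {d : ℕ} [NeZero d] (φ : G →+ ZMod d) (hφ : Surjective φ) (B : Finset (ZMod d)) :
    (Finset.univ.filter (fun x => φ x ∈ B)).card = B.card * (Fintype.card G / d) := by
  have hfib : ∀ b : ZMod d, (Finset.univ.filter (fun x => φ x = b)).card
      = (Finset.univ.filter (fun x : G => φ x = 0)).card := by
    intro b
    obtain ⟨g, hg⟩ := hφ b
    refine Finset.card_nbij' (fun x => x - g) (fun x => x + g) ?_ ?_ ?_ ?_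
    · intro a ha
      simp only [Finset.mem_coe, Finset.mem_filter, Finset.mem_univ, true_and] at ha ⊢
      rw [map_sub, ha, hg, sub_self]
    · intro a ha
      simp only [Finset.mem_coe, Finset.mem_filter, Finset.mem_univ, true_and] at ha ⊢
      rw [map_add, ha, hg, zero_add]
    · intro a _
      simp
    · intro a _
      simp
  have hsum : ∑ b : ZMod d, (Finset.univ.filter (fun x : G => φ x = b)).card
      = Fintype.card G := by
    rw [← Finset.card_univ (α := G)]
    exact (Finset.card_eq_sum_card_fiberwise (fun x _ => Finset.mem_univ (φ x))).symm
  have hdmul : Fintype.card G = d * (Finset.univ.filter (fun x : G => φ x = 0)).card := by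
    rw [← hsum, Finset.sum_congr rfl (fun b _ => hfib b), Finset.sum_const, smul_eq_mul,
      Finset.card_univ, ZMod.card]
  have hd0 : 0 < d := Nat.pos_of_ne_zero (NeZero.ne d)
  have hfval : (Finset.univ.filter (fun x : G => φ x = 0)).card = Fintype.card G / d := by
    rw [hdmul, Nat.mul_div_cancel_left _ hd0]
  have hfibeq : ∀ b ∈ B, ((Finset.univ.filter (fun x : G => φ x ∈ B)).filter
      (fun x => φ x = b)).card = Fintype.card G / d := by
    intro b hb
    have : (Finset.univ.filter (fun x : G => φ x ∈ B)).filter (fun x => φ x = b)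
        = Finset.univ.filter (fun x : G => φ x = b) := by
      apply Finset.ext
      intro z
      simp only [Finset.mem_filter, Finset.mem_univ, true_and]
      constructor
      · rintro ⟨_, h2⟩; exact h2
      · intro h2; exact ⟨h2 ▸ hb, h2⟩
    rw [this, hfib b, hfval]
  rw [Finset.card_eq_sum_card_fiberwise (s := Finset.univ.filter (fun x => φ x ∈ B)) (t := B)
      (f := φ) (fun x hx => (Finset.mem_filter.mp hx).2),
    Finset.sum_congr rfl hfibeq, Finset.sum_const, smul_eq_mul]


theorem stmt12 {G : Type*} [AddCommGroup G] [Fintype G]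
    (d : ℕ) (hd : Odd d) (hd0 : 0 < d) (hdiv : d ∣ AddMonoid.exponent G) :
    ∃ A : Finset G, IsTIndep 3 A ∧
      A.card = (d + 1) / 6 * (Fintype.card G / d) := by
  classical
  by_cases hm : (d + 1) / 6 = 0
  · refine ⟨∅, ?_, by rw [hm, zero_mul, Finset.card_empty]⟩
    intro c hsupp _ _ x
    exact hsupp x (Finset.notMem_empty x)
  · have hm1 : 1 ≤ (d + 1) / 6 := Nat.pos_of_ne_zero hm
    have hd6 : 6 * ((d + 1) / 6) ≤ d + 1 := by
      have := Nat.div_mul_le_self (d + 1) 6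
      omega
    haveI : NeZero d := ⟨hd0.ne'⟩
    obtain ⟨φ, hφ⟩ := exists_surj_zmod d hd0 hdiv
    obtain ⟨hBi, hBc⟩ := indepB (d := d) hm1 hd6 hd0
    refine ⟨Finset.univ.filter (fun x => φ x ∈
      (Finset.Ico ((d + 1) / 6) (2 * ((d + 1) / 6))).image (Nat.cast : ℕ → ZMod d)),
      transfer φ _ hBi, ?_⟩
    rw [card_filter_preimage φ hφ, hBc]
end
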